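/- arXiv:2209.07772 — 2 statements merged into one kernel-verified Lean document; each statement's English description precedes it below -/
import Mathlib

section
/- Fix any b-coloring of the constructed graph H with k colors, and for each incident pair (e, v) with v ∈ e ∈ E(G) let C_{e,v} be the set of colors appearing on the vertices of L_{e,v}. Then for all incident pairs (e, v) and (e', v') with (e, v) ≠ (e', v'), the sets C_{e,v} and C_{e',v'} are disjoint. -/
open Finset

/-- `a` is a b-vertex of the coloring `c`: it has a neighbor in every color class
other than its own. -/
def IsBVertex {VH : Type*} (H : SimpleGraph VH) {k : ℕ} (c : VH → Fin k) (a : VH) : Prop :=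
  ∀ col : Fin k, col ≠ c a → ∃ b : VH, H.Adj a b ∧ c b = col

/-- `c` is a b-coloring of `H` with `k` colors: a proper coloring using all `k` colors
in which every color class contains a b-vertex. -/
def IsBColoring {VH : Type*} (H : SimpleGraph VH) (k : ℕ) (c : VH → Fin k) : Prop :=
  (∀ ⦃a b : VH⦄, H.Adj a b → c a ≠ c b) ∧ Function.Surjective c ∧
    ∀ col : Fin k, ∃ a : VH, c a = col ∧ IsBVertex H c a

variable {V : Type*} [Fintype V] [DecidableEq V]

/-- `W`, the total weight of all edges. -/
def totW (G : SimpleGraph V) [DecidableRel G.Adj] (wt : Sym2 V → ℕ) : ℕ :=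
  ∑ e ∈ G.edgeFinset, wt e

/-- `W_v`, the total weight of the edges incident with `v`. -/
def vertW (G : SimpleGraph V) [DecidableRel G.Adj] (wt : Sym2 V → ℕ) (v : V) : ℕ :=
  ∑ e ∈ G.edgeFinset.filter (fun e => v ∈ e), wt e

/-- `k = 2W + 3m + n + 2`. -/
def numColors (G : SimpleGraph V) [DecidableRel G.Adj] (wt : Sym2 V → ℕ) : ℕ :=
  2 * totW G wt + 3 * G.edgeFinset.card + Fintype.card V + 2

/-- An orientation of `(G, wt)` (given by choosing a head `o e ∈ e` for every edge `e`)
is circulating if, at every vertex, the entering weight equals the leaving weight. -/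
def IsCirculating (G : SimpleGraph V) [DecidableRel G.Adj] (wt : Sym2 V → ℕ)
    (o : Sym2 V → V) : Prop :=
  (∀ e ∈ G.edgeFinset, o e ∈ e) ∧
    ∀ v : V,
      ∑ e ∈ G.edgeFinset.filter (fun e => v ∈ e ∧ o e = v), wt e =
        ∑ e ∈ G.edgeFinset.filter (fun e => v ∈ e ∧ o e ≠ v), wt e

/-- The data of the construction of the graph `H` from `(G, wt)`. -/
structure GadgetData (V : Type*) [Fintype V] [DecidableEq V]
    (G : SimpleGraph V) [DecidableRel G.Adj] (wt : Sym2 V → ℕ) where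
  /-- the vertex type of `H` -/
  VH : Type*
  fintypeVH : Fintype VH
  decEqVH : DecidableEq VH
  /-- the graph `H` -/
  H : SimpleGraph VH
  decAdj : DecidableRel H.Adj
  /-- the center `s*` of the superstar -/
  sstar : VH
  /-- the leaves of the superstar -/
  Sleaves : Finset VH
  /-- the centers of the anonymous stars -/
  Acenters : Finset VH
  /-- the leaves of each anonymous star -/
  Aleaves : VH → Finset VH
  /-- the sets `L_{e,v}` (subsets of the superstar leaves) -/
  L : Sym2 V → V → Finset VH
  /-- the copy of a vertex of `G` inside `H` -/
  orig : V → VH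
  /-- the sets `P_v` -/
  P : V → Finset VH
  /-- the vertices `x_{e,v}` -/
  x : Sym2 V → V → VH
  /-- the sets `Y_e` -/
  Y : Sym2 V → Finset VH
  /-- the sets `Z_e` -/
  Z : Sym2 V → Finset VH
  /-- the vertices `q_{e,1}, q_{e,2}` -/
  q : Sym2 V → Fin 2 → VH

namespace GadgetData

variable {G : SimpleGraph V} [DecidableRel G.Adj] {wt : Sym2 V → ℕ}

/-- The set `X = {x_{e,v} : v ∈ e ∈ E(G)}`. -/
def Xset (g : GadgetData V G wt) : Finset g.VH :=
  letI := g.fintypeVH; letI := g.decEqVH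
  G.edgeFinset.biUnion fun e => (Finset.univ.filter fun v => v ∈ e).image (g.x e)

/-- The set `Q = {q_{e,1}, q_{e,2} : e ∈ E(G)}`. -/
def Qset (g : GadgetData V G wt) : Finset g.VH :=
  letI := g.decEqVH
  G.edgeFinset.biUnion fun e => {g.q e 0, g.q e 1}

/-- The parts into which the vertex set of `H` is partitioned. -/
def parts (g : GadgetData V G wt) : List (Finset g.VH) :=
  letI := g.fintypeVH; letI := g.decEqVH
  [{g.sstar}, g.Sleaves, g.Acenters, g.Acenters.biUnion g.Aleaves,
    Finset.univ.image g.orig, Finset.univ.biUnion g.P,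
    g.Xset, G.edgeFinset.biUnion g.Y, G.edgeFinset.biUnion g.Z, g.Qset]

/-- One directional specification of the adjacencies of `H`. -/
def AdjSpec (g : GadgetData V G wt) (a b : g.VH) : Prop :=
  (a = g.sstar ∧ b ∈ g.Sleaves) ∨
  (∃ s ∈ g.Acenters, a = s ∧ b ∈ g.Aleaves s) ∨
  (∃ v : V, a = g.orig v ∧ b ∈ g.P v) ∨
  (∃ e ∈ G.edgeFinset, ∃ v : V, v ∈ e ∧ a = g.orig v ∧ (b ∈ g.L e v ∨ b ∈ g.Y e)) ∨
  (∃ e ∈ G.edgeFinset, ∃ v : V, v ∈ e ∧ a = g.x e v ∧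
    (b ∈ g.Y e ∨ b ∈ g.Z e ∨ b ∈ g.L e v)) ∨
  (∃ e ∈ G.edgeFinset, a = g.q e 0 ∧ b = g.q e 1) ∨
  (∃ e ∈ G.edgeFinset, ∃ h : Fin 2, a = g.q e h ∧
    (b ∈ g.Z e ∨ (∃ v : V, v ∈ e ∧ b ∈ g.L e v) ∨ (∃ v : V, v ∈ e ∧ b = g.x e v)))

/-- Degree in `H`. -/
def deg (g : GadgetData V G wt) (a : g.VH) : ℕ :=
  letI := g.fintypeVH; letI := g.decEqVH; letI := g.decAdj
  g.H.degree a

/-- The set `{s*} ∪ V(G) ∪ Q ∪ A ∪ X`. -/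
def bigSet (g : GadgetData V G wt) : Finset g.VH :=
  letI := g.fintypeVH; letI := g.decEqVH
  {g.sstar} ∪ Finset.univ.image g.orig ∪ g.Qset ∪ g.Acenters ∪ g.Xset

end GadgetData

/-- The construction of the graph `H` from `(G, wt)`: the data together with all the
requirements (sizes of the parts, their disjointness, and the adjacency relation). -/
structure Gadget (V : Type*) [Fintype V] [DecidableEq V]
    (G : SimpleGraph V) [DecidableRel G.Adj] (wt : Sym2 V → ℕ)
    extends GadgetData V G wt where
  card_Sleaves : Sleaves.card = numColors G wt - 1
  card_Acenters : Acenters.card = 2 * totW G wt + 1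
  card_Aleaves : ∀ s ∈ Acenters, (Aleaves s).card = numColors G wt - 1
  Aleaves_disjoint : ∀ s ∈ Acenters, ∀ s' ∈ Acenters, s ≠ s' →
    Disjoint (Aleaves s) (Aleaves s')
  L_subset : ∀ e ∈ G.edgeFinset, ∀ v ∈ e, L e v ⊆ Sleaves
  card_L : ∀ e ∈ G.edgeFinset, ∀ v ∈ e, (L e v).card = wt e
  L_disjoint : ∀ e ∈ G.edgeFinset, ∀ v ∈ e, ∀ e' ∈ G.edgeFinset, ∀ v' ∈ e',
    (e, v) ≠ (e', v') → Disjoint (L e v) (L e' v')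
  card_P : ∀ v : V, 2 * (P v).card + 3 * vertW G wt v + 2 = 2 * numColors G wt
  card_Y : ∀ e ∈ G.edgeFinset, (Y e).card = wt e
  card_Z : ∀ e ∈ G.edgeFinset, (Z e).card + 2 * wt e + 3 = numColors G wt
  orig_inj : Function.Injective orig
  P_disjoint : ∀ v v' : V, v ≠ v' → Disjoint (P v) (P v')
  x_inj : ∀ e ∈ G.edgeFinset, ∀ v ∈ e, ∀ e' ∈ G.edgeFinset, ∀ v' ∈ e',
    x e v = x e' v' → (e, v) = (e', v')
  Y_disjoint : ∀ e ∈ G.edgeFinset, ∀ e' ∈ G.edgeFinset, e ≠ e' → Disjoint (Y e) (Y e')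
  Z_disjoint : ∀ e ∈ G.edgeFinset, ∀ e' ∈ G.edgeFinset, e ≠ e' → Disjoint (Z e) (Z e')
  q_inj : ∀ e ∈ G.edgeFinset, ∀ h : Fin 2, ∀ e' ∈ G.edgeFinset, ∀ h' : Fin 2,
    q e h = q e' h' → (e, h) = (e', h')
  parts_disjoint : toGadgetData.parts.Pairwise Disjoint
  parts_cover : ∀ a : VH, ∃ p ∈ toGadgetData.parts, a ∈ p
  adj_iff : ∀ a b : VH, H.Adj a b ↔
    toGadgetData.AdjSpec a b ∨ toGadgetData.AdjSpec b a
section Aux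
variable {V : Type*} [Fintype V] [DecidableEq V] {G : SimpleGraph V} [DecidableRel G.Adj]
  {wt : Sym2 V → ℕ}

lemma fin2cases (h : Fin 2) : h = 0 ∨ h = 1 := by revert h; decide

lemma excl_0_1 (g : Gadget V G wt) {a : g.VH} (h1 : a = g.sstar)
    (h2 : a ∈ g.Sleaves) : False := by
  letI := g.fintypeVH; letI := g.decEqVH
  have hd := List.pairwise_iff_getElem.mp g.parts_disjoint 0 1 (by simp [GadgetData.parts])
    (by simp [GadgetData.parts]) (by omega)
  simp only [GadgetData.parts, List.getElem_cons_succ, List.getElem_cons_zero] at hd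
  exact Finset.disjoint_left.mp hd
    (by exact Finset.mem_singleton.mpr h1)
    (by exact h2)

lemma excl_0_2 (g : Gadget V G wt) {a : g.VH} (h1 : a = g.sstar)
    (h2 : a ∈ g.Acenters) : False := by
  letI := g.fintypeVH; letI := g.decEqVH
  have hd := List.pairwise_iff_getElem.mp g.parts_disjoint 0 2 (by simp [GadgetData.parts])
    (by simp [GadgetData.parts]) (by omega)
  simp only [GadgetData.parts, List.getElem_cons_succ, List.getElem_cons_zero] at hd
  exact Finset.disjoint_left.mp hd
    (by exact Finset.mem_singleton.mpr h1)
    (by exact h2)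

lemma excl_0_3 (g : Gadget V G wt) {a : g.VH} (h1 : a = g.sstar)
    (h2 : ∃ s, s ∈ g.Acenters ∧ a ∈ g.Aleaves s) : False := by
  letI := g.fintypeVH; letI := g.decEqVH
  have hd := List.pairwise_iff_getElem.mp g.parts_disjoint 0 3 (by simp [GadgetData.parts])
    (by simp [GadgetData.parts]) (by omega)
  simp only [GadgetData.parts, List.getElem_cons_succ, List.getElem_cons_zero] at hd
  exact Finset.disjoint_left.mp hd
    (by exact Finset.mem_singleton.mpr h1)
    (by obtain ⟨s, hs, hm⟩ := h2; exact Finset.mem_biUnion.mpr ⟨s, hs, hm⟩)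

lemma excl_0_4 (g : Gadget V G wt) {a : g.VH} (h1 : a = g.sstar)
    (h2 : ∃ v : V, a = g.orig v) : False := by
  letI := g.fintypeVH; letI := g.decEqVH
  have hd := List.pairwise_iff_getElem.mp g.parts_disjoint 0 4 (by simp [GadgetData.parts])
    (by simp [GadgetData.parts]) (by omega)
  simp only [GadgetData.parts, List.getElem_cons_succ, List.getElem_cons_zero] at hd
  exact Finset.disjoint_left.mp hd
    (by exact Finset.mem_singleton.mpr h1)
    (by obtain ⟨v, hv⟩ := h2; exact Finset.mem_image.mpr ⟨v, Finset.mem_univ v, hv.symm⟩)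

lemma excl_0_5 (g : Gadget V G wt) {a : g.VH} (h1 : a = g.sstar)
    (h2 : ∃ v : V, a ∈ g.P v) : False := by
  letI := g.fintypeVH; letI := g.decEqVH
  have hd := List.pairwise_iff_getElem.mp g.parts_disjoint 0 5 (by simp [GadgetData.parts])
    (by simp [GadgetData.parts]) (by omega)
  simp only [GadgetData.parts, List.getElem_cons_succ, List.getElem_cons_zero] at hd
  exact Finset.disjoint_left.mp hd
    (by exact Finset.mem_singleton.mpr h1)
    (by obtain ⟨v, hv⟩ := h2; exact Finset.mem_biUnion.mpr ⟨v, Finset.mem_univ v, hv⟩)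

lemma excl_0_6 (g : Gadget V G wt) {a : g.VH} (h1 : a = g.sstar)
    (h2 : ∃ e, e ∈ G.edgeFinset ∧ ∃ v, v ∈ e ∧ a = g.x e v) : False := by
  letI := g.fintypeVH; letI := g.decEqVH
  have hd := List.pairwise_iff_getElem.mp g.parts_disjoint 0 6 (by simp [GadgetData.parts])
    (by simp [GadgetData.parts]) (by omega)
  simp only [GadgetData.parts, List.getElem_cons_succ, List.getElem_cons_zero] at hd
  exact Finset.disjoint_left.mp hd
    (by exact Finset.mem_singleton.mpr h1)
    (by obtain ⟨e, he, v, hv, hx⟩ := h2; unfold GadgetData.Xset; exact Finset.mem_biUnion.mpr ⟨e, he, Finset.mem_image.mpr ⟨v, Finset.mem_filter.mpr ⟨Finset.mem_univ v, hv⟩, hx.symm⟩⟩)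

lemma excl_0_7 (g : Gadget V G wt) {a : g.VH} (h1 : a = g.sstar)
    (h2 : ∃ e, e ∈ G.edgeFinset ∧ a ∈ g.Y e) : False := by
  letI := g.fintypeVH; letI := g.decEqVH
  have hd := List.pairwise_iff_getElem.mp g.parts_disjoint 0 7 (by simp [GadgetData.parts])
    (by simp [GadgetData.parts]) (by omega)
  simp only [GadgetData.parts, List.getElem_cons_succ, List.getElem_cons_zero] at hd
  exact Finset.disjoint_left.mp hd
    (by exact Finset.mem_singleton.mpr h1)
    (by obtain ⟨e, he, hm⟩ := h2; exact Finset.mem_biUnion.mpr ⟨e, he, hm⟩)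

lemma excl_0_8 (g : Gadget V G wt) {a : g.VH} (h1 : a = g.sstar)
    (h2 : ∃ e, e ∈ G.edgeFinset ∧ a ∈ g.Z e) : False := by
  letI := g.fintypeVH; letI := g.decEqVH
  have hd := List.pairwise_iff_getElem.mp g.parts_disjoint 0 8 (by simp [GadgetData.parts])
    (by simp [GadgetData.parts]) (by omega)
  simp only [GadgetData.parts, List.getElem_cons_succ, List.getElem_cons_zero] at hd
  exact Finset.disjoint_left.mp hd
    (by exact Finset.mem_singleton.mpr h1)
    (by obtain ⟨e, he, hm⟩ := h2; exact Finset.mem_biUnion.mpr ⟨e, he, hm⟩)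

lemma excl_0_9 (g : Gadget V G wt) {a : g.VH} (h1 : a = g.sstar)
    (h2 : ∃ e, e ∈ G.edgeFinset ∧ ∃ h : Fin 2, a = g.q e h) : False := by
  letI := g.fintypeVH; letI := g.decEqVH
  have hd := List.pairwise_iff_getElem.mp g.parts_disjoint 0 9 (by simp [GadgetData.parts])
    (by simp [GadgetData.parts]) (by omega)
  simp only [GadgetData.parts, List.getElem_cons_succ, List.getElem_cons_zero] at hd
  exact Finset.disjoint_left.mp hd
    (by exact Finset.mem_singleton.mpr h1)
    (by obtain ⟨e, he, hh, hq⟩ := h2; unfold GadgetData.Qset; refine Finset.mem_biUnion.mpr ⟨e, he, ?_⟩; rcases fin2cases hh with rfl | rfl <;> simp [hq])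

lemma excl_1_2 (g : Gadget V G wt) {a : g.VH} (h1 : a ∈ g.Sleaves)
    (h2 : a ∈ g.Acenters) : False := by
  letI := g.fintypeVH; letI := g.decEqVH
  have hd := List.pairwise_iff_getElem.mp g.parts_disjoint 1 2 (by simp [GadgetData.parts])
    (by simp [GadgetData.parts]) (by omega)
  simp only [GadgetData.parts, List.getElem_cons_succ, List.getElem_cons_zero] at hd
  exact Finset.disjoint_left.mp hd
    (by exact h1)
    (by exact h2)

lemma excl_1_3 (g : Gadget V G wt) {a : g.VH} (h1 : a ∈ g.Sleaves)
    (h2 : ∃ s, s ∈ g.Acenters ∧ a ∈ g.Aleaves s) : False := by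
  letI := g.fintypeVH; letI := g.decEqVH
  have hd := List.pairwise_iff_getElem.mp g.parts_disjoint 1 3 (by simp [GadgetData.parts])
    (by simp [GadgetData.parts]) (by omega)
  simp only [GadgetData.parts, List.getElem_cons_succ, List.getElem_cons_zero] at hd
  exact Finset.disjoint_left.mp hd
    (by exact h1)
    (by obtain ⟨s, hs, hm⟩ := h2; exact Finset.mem_biUnion.mpr ⟨s, hs, hm⟩)

lemma excl_1_4 (g : Gadget V G wt) {a : g.VH} (h1 : a ∈ g.Sleaves)
    (h2 : ∃ v : V, a = g.orig v) : False := by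
  letI := g.fintypeVH; letI := g.decEqVH
  have hd := List.pairwise_iff_getElem.mp g.parts_disjoint 1 4 (by simp [GadgetData.parts])
    (by simp [GadgetData.parts]) (by omega)
  simp only [GadgetData.parts, List.getElem_cons_succ, List.getElem_cons_zero] at hd
  exact Finset.disjoint_left.mp hd
    (by exact h1)
    (by obtain ⟨v, hv⟩ := h2; exact Finset.mem_image.mpr ⟨v, Finset.mem_univ v, hv.symm⟩)

lemma excl_1_5 (g : Gadget V G wt) {a : g.VH} (h1 : a ∈ g.Sleaves)
    (h2 : ∃ v : V, a ∈ g.P v) : False := by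
  letI := g.fintypeVH; letI := g.decEqVH
  have hd := List.pairwise_iff_getElem.mp g.parts_disjoint 1 5 (by simp [GadgetData.parts])
    (by simp [GadgetData.parts]) (by omega)
  simp only [GadgetData.parts, List.getElem_cons_succ, List.getElem_cons_zero] at hd
  exact Finset.disjoint_left.mp hd
    (by exact h1)
    (by obtain ⟨v, hv⟩ := h2; exact Finset.mem_biUnion.mpr ⟨v, Finset.mem_univ v, hv⟩)

lemma excl_1_6 (g : Gadget V G wt) {a : g.VH} (h1 : a ∈ g.Sleaves)
    (h2 : ∃ e, e ∈ G.edgeFinset ∧ ∃ v, v ∈ e ∧ a = g.x e v) : False := by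
  letI := g.fintypeVH; letI := g.decEqVH
  have hd := List.pairwise_iff_getElem.mp g.parts_disjoint 1 6 (by simp [GadgetData.parts])
    (by simp [GadgetData.parts]) (by omega)
  simp only [GadgetData.parts, List.getElem_cons_succ, List.getElem_cons_zero] at hd
  exact Finset.disjoint_left.mp hd
    (by exact h1)
    (by obtain ⟨e, he, v, hv, hx⟩ := h2; unfold GadgetData.Xset; exact Finset.mem_biUnion.mpr ⟨e, he, Finset.mem_image.mpr ⟨v, Finset.mem_filter.mpr ⟨Finset.mem_univ v, hv⟩, hx.symm⟩⟩)

lemma excl_1_7 (g : Gadget V G wt) {a : g.VH} (h1 : a ∈ g.Sleaves)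
    (h2 : ∃ e, e ∈ G.edgeFinset ∧ a ∈ g.Y e) : False := by
  letI := g.fintypeVH; letI := g.decEqVH
  have hd := List.pairwise_iff_getElem.mp g.parts_disjoint 1 7 (by simp [GadgetData.parts])
    (by simp [GadgetData.parts]) (by omega)
  simp only [GadgetData.parts, List.getElem_cons_succ, List.getElem_cons_zero] at hd
  exact Finset.disjoint_left.mp hd
    (by exact h1)
    (by obtain ⟨e, he, hm⟩ := h2; exact Finset.mem_biUnion.mpr ⟨e, he, hm⟩)

lemma excl_1_8 (g : Gadget V G wt) {a : g.VH} (h1 : a ∈ g.Sleaves)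
    (h2 : ∃ e, e ∈ G.edgeFinset ∧ a ∈ g.Z e) : False := by
  letI := g.fintypeVH; letI := g.decEqVH
  have hd := List.pairwise_iff_getElem.mp g.parts_disjoint 1 8 (by simp [GadgetData.parts])
    (by simp [GadgetData.parts]) (by omega)
  simp only [GadgetData.parts, List.getElem_cons_succ, List.getElem_cons_zero] at hd
  exact Finset.disjoint_left.mp hd
    (by exact h1)
    (by obtain ⟨e, he, hm⟩ := h2; exact Finset.mem_biUnion.mpr ⟨e, he, hm⟩)

lemma excl_1_9 (g : Gadget V G wt) {a : g.VH} (h1 : a ∈ g.Sleaves)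
    (h2 : ∃ e, e ∈ G.edgeFinset ∧ ∃ h : Fin 2, a = g.q e h) : False := by
  letI := g.fintypeVH; letI := g.decEqVH
  have hd := List.pairwise_iff_getElem.mp g.parts_disjoint 1 9 (by simp [GadgetData.parts])
    (by simp [GadgetData.parts]) (by omega)
  simp only [GadgetData.parts, List.getElem_cons_succ, List.getElem_cons_zero] at hd
  exact Finset.disjoint_left.mp hd
    (by exact h1)
    (by obtain ⟨e, he, hh, hq⟩ := h2; unfold GadgetData.Qset; refine Finset.mem_biUnion.mpr ⟨e, he, ?_⟩; rcases fin2cases hh with rfl | rfl <;> simp [hq])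

lemma excl_2_3 (g : Gadget V G wt) {a : g.VH} (h1 : a ∈ g.Acenters)
    (h2 : ∃ s, s ∈ g.Acenters ∧ a ∈ g.Aleaves s) : False := by
  letI := g.fintypeVH; letI := g.decEqVH
  have hd := List.pairwise_iff_getElem.mp g.parts_disjoint 2 3 (by simp [GadgetData.parts])
    (by simp [GadgetData.parts]) (by omega)
  simp only [GadgetData.parts, List.getElem_cons_succ, List.getElem_cons_zero] at hd
  exact Finset.disjoint_left.mp hd
    (by exact h1)
    (by obtain ⟨s, hs, hm⟩ := h2; exact Finset.mem_biUnion.mpr ⟨s, hs, hm⟩)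

lemma excl_2_4 (g : Gadget V G wt) {a : g.VH} (h1 : a ∈ g.Acenters)
    (h2 : ∃ v : V, a = g.orig v) : False := by
  letI := g.fintypeVH; letI := g.decEqVH
  have hd := List.pairwise_iff_getElem.mp g.parts_disjoint 2 4 (by simp [GadgetData.parts])
    (by simp [GadgetData.parts]) (by omega)
  simp only [GadgetData.parts, List.getElem_cons_succ, List.getElem_cons_zero] at hd
  exact Finset.disjoint_left.mp hd
    (by exact h1)
    (by obtain ⟨v, hv⟩ := h2; exact Finset.mem_image.mpr ⟨v, Finset.mem_univ v, hv.symm⟩)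

lemma excl_2_5 (g : Gadget V G wt) {a : g.VH} (h1 : a ∈ g.Acenters)
    (h2 : ∃ v : V, a ∈ g.P v) : False := by
  letI := g.fintypeVH; letI := g.decEqVH
  have hd := List.pairwise_iff_getElem.mp g.parts_disjoint 2 5 (by simp [GadgetData.parts])
    (by simp [GadgetData.parts]) (by omega)
  simp only [GadgetData.parts, List.getElem_cons_succ, List.getElem_cons_zero] at hd
  exact Finset.disjoint_left.mp hd
    (by exact h1)
    (by obtain ⟨v, hv⟩ := h2; exact Finset.mem_biUnion.mpr ⟨v, Finset.mem_univ v, hv⟩)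

lemma excl_2_6 (g : Gadget V G wt) {a : g.VH} (h1 : a ∈ g.Acenters)
    (h2 : ∃ e, e ∈ G.edgeFinset ∧ ∃ v, v ∈ e ∧ a = g.x e v) : False := by
  letI := g.fintypeVH; letI := g.decEqVH
  have hd := List.pairwise_iff_getElem.mp g.parts_disjoint 2 6 (by simp [GadgetData.parts])
    (by simp [GadgetData.parts]) (by omega)
  simp only [GadgetData.parts, List.getElem_cons_succ, List.getElem_cons_zero] at hd
  exact Finset.disjoint_left.mp hd
    (by exact h1)
    (by obtain ⟨e, he, v, hv, hx⟩ := h2; unfold GadgetData.Xset; exact Finset.mem_biUnion.mpr ⟨e, he, Finset.mem_image.mpr ⟨v, Finset.mem_filter.mpr ⟨Finset.mem_univ v, hv⟩, hx.symm⟩⟩)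

lemma excl_2_7 (g : Gadget V G wt) {a : g.VH} (h1 : a ∈ g.Acenters)
    (h2 : ∃ e, e ∈ G.edgeFinset ∧ a ∈ g.Y e) : False := by
  letI := g.fintypeVH; letI := g.decEqVH
  have hd := List.pairwise_iff_getElem.mp g.parts_disjoint 2 7 (by simp [GadgetData.parts])
    (by simp [GadgetData.parts]) (by omega)
  simp only [GadgetData.parts, List.getElem_cons_succ, List.getElem_cons_zero] at hd
  exact Finset.disjoint_left.mp hd
    (by exact h1)
    (by obtain ⟨e, he, hm⟩ := h2; exact Finset.mem_biUnion.mpr ⟨e, he, hm⟩)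

lemma excl_2_8 (g : Gadget V G wt) {a : g.VH} (h1 : a ∈ g.Acenters)
    (h2 : ∃ e, e ∈ G.edgeFinset ∧ a ∈ g.Z e) : False := by
  letI := g.fintypeVH; letI := g.decEqVH
  have hd := List.pairwise_iff_getElem.mp g.parts_disjoint 2 8 (by simp [GadgetData.parts])
    (by simp [GadgetData.parts]) (by omega)
  simp only [GadgetData.parts, List.getElem_cons_succ, List.getElem_cons_zero] at hd
  exact Finset.disjoint_left.mp hd
    (by exact h1)
    (by obtain ⟨e, he, hm⟩ := h2; exact Finset.mem_biUnion.mpr ⟨e, he, hm⟩)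

lemma excl_2_9 (g : Gadget V G wt) {a : g.VH} (h1 : a ∈ g.Acenters)
    (h2 : ∃ e, e ∈ G.edgeFinset ∧ ∃ h : Fin 2, a = g.q e h) : False := by
  letI := g.fintypeVH; letI := g.decEqVH
  have hd := List.pairwise_iff_getElem.mp g.parts_disjoint 2 9 (by simp [GadgetData.parts])
    (by simp [GadgetData.parts]) (by omega)
  simp only [GadgetData.parts, List.getElem_cons_succ, List.getElem_cons_zero] at hd
  exact Finset.disjoint_left.mp hd
    (by exact h1)
    (by obtain ⟨e, he, hh, hq⟩ := h2; unfold GadgetData.Qset; refine Finset.mem_biUnion.mpr ⟨e, he, ?_⟩; rcases fin2cases hh with rfl | rfl <;> simp [hq])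

lemma excl_3_4 (g : Gadget V G wt) {a : g.VH} (h1 : ∃ s, s ∈ g.Acenters ∧ a ∈ g.Aleaves s)
    (h2 : ∃ v : V, a = g.orig v) : False := by
  letI := g.fintypeVH; letI := g.decEqVH
  have hd := List.pairwise_iff_getElem.mp g.parts_disjoint 3 4 (by simp [GadgetData.parts])
    (by simp [GadgetData.parts]) (by omega)
  simp only [GadgetData.parts, List.getElem_cons_succ, List.getElem_cons_zero] at hd
  exact Finset.disjoint_left.mp hd
    (by obtain ⟨s, hs, hm⟩ := h1; exact Finset.mem_biUnion.mpr ⟨s, hs, hm⟩)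
    (by obtain ⟨v, hv⟩ := h2; exact Finset.mem_image.mpr ⟨v, Finset.mem_univ v, hv.symm⟩)

lemma excl_3_5 (g : Gadget V G wt) {a : g.VH} (h1 : ∃ s, s ∈ g.Acenters ∧ a ∈ g.Aleaves s)
    (h2 : ∃ v : V, a ∈ g.P v) : False := by
  letI := g.fintypeVH; letI := g.decEqVH
  have hd := List.pairwise_iff_getElem.mp g.parts_disjoint 3 5 (by simp [GadgetData.parts])
    (by simp [GadgetData.parts]) (by omega)
  simp only [GadgetData.parts, List.getElem_cons_succ, List.getElem_cons_zero] at hd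
  exact Finset.disjoint_left.mp hd
    (by obtain ⟨s, hs, hm⟩ := h1; exact Finset.mem_biUnion.mpr ⟨s, hs, hm⟩)
    (by obtain ⟨v, hv⟩ := h2; exact Finset.mem_biUnion.mpr ⟨v, Finset.mem_univ v, hv⟩)

lemma excl_3_6 (g : Gadget V G wt) {a : g.VH} (h1 : ∃ s, s ∈ g.Acenters ∧ a ∈ g.Aleaves s)
    (h2 : ∃ e, e ∈ G.edgeFinset ∧ ∃ v, v ∈ e ∧ a = g.x e v) : False := by
  letI := g.fintypeVH; letI := g.decEqVH
  have hd := List.pairwise_iff_getElem.mp g.parts_disjoint 3 6 (by simp [GadgetData.parts])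
    (by simp [GadgetData.parts]) (by omega)
  simp only [GadgetData.parts, List.getElem_cons_succ, List.getElem_cons_zero] at hd
  exact Finset.disjoint_left.mp hd
    (by obtain ⟨s, hs, hm⟩ := h1; exact Finset.mem_biUnion.mpr ⟨s, hs, hm⟩)
    (by obtain ⟨e, he, v, hv, hx⟩ := h2; unfold GadgetData.Xset; exact Finset.mem_biUnion.mpr ⟨e, he, Finset.mem_image.mpr ⟨v, Finset.mem_filter.mpr ⟨Finset.mem_univ v, hv⟩, hx.symm⟩⟩)

lemma excl_3_7 (g : Gadget V G wt) {a : g.VH} (h1 : ∃ s, s ∈ g.Acenters ∧ a ∈ g.Aleaves s)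
    (h2 : ∃ e, e ∈ G.edgeFinset ∧ a ∈ g.Y e) : False := by
  letI := g.fintypeVH; letI := g.decEqVH
  have hd := List.pairwise_iff_getElem.mp g.parts_disjoint 3 7 (by simp [GadgetData.parts])
    (by simp [GadgetData.parts]) (by omega)
  simp only [GadgetData.parts, List.getElem_cons_succ, List.getElem_cons_zero] at hd
  exact Finset.disjoint_left.mp hd
    (by obtain ⟨s, hs, hm⟩ := h1; exact Finset.mem_biUnion.mpr ⟨s, hs, hm⟩)
    (by obtain ⟨e, he, hm⟩ := h2; exact Finset.mem_biUnion.mpr ⟨e, he, hm⟩)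

lemma excl_3_8 (g : Gadget V G wt) {a : g.VH} (h1 : ∃ s, s ∈ g.Acenters ∧ a ∈ g.Aleaves s)
    (h2 : ∃ e, e ∈ G.edgeFinset ∧ a ∈ g.Z e) : False := by
  letI := g.fintypeVH; letI := g.decEqVH
  have hd := List.pairwise_iff_getElem.mp g.parts_disjoint 3 8 (by simp [GadgetData.parts])
    (by simp [GadgetData.parts]) (by omega)
  simp only [GadgetData.parts, List.getElem_cons_succ, List.getElem_cons_zero] at hd
  exact Finset.disjoint_left.mp hd
    (by obtain ⟨s, hs, hm⟩ := h1; exact Finset.mem_biUnion.mpr ⟨s, hs, hm⟩)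
    (by obtain ⟨e, he, hm⟩ := h2; exact Finset.mem_biUnion.mpr ⟨e, he, hm⟩)

lemma excl_3_9 (g : Gadget V G wt) {a : g.VH} (h1 : ∃ s, s ∈ g.Acenters ∧ a ∈ g.Aleaves s)
    (h2 : ∃ e, e ∈ G.edgeFinset ∧ ∃ h : Fin 2, a = g.q e h) : False := by
  letI := g.fintypeVH; letI := g.decEqVH
  have hd := List.pairwise_iff_getElem.mp g.parts_disjoint 3 9 (by simp [GadgetData.parts])
    (by simp [GadgetData.parts]) (by omega)
  simp only [GadgetData.parts, List.getElem_cons_succ, List.getElem_cons_zero] at hd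
  exact Finset.disjoint_left.mp hd
    (by obtain ⟨s, hs, hm⟩ := h1; exact Finset.mem_biUnion.mpr ⟨s, hs, hm⟩)
    (by obtain ⟨e, he, hh, hq⟩ := h2; unfold GadgetData.Qset; refine Finset.mem_biUnion.mpr ⟨e, he, ?_⟩; rcases fin2cases hh with rfl | rfl <;> simp [hq])

lemma excl_4_5 (g : Gadget V G wt) {a : g.VH} (h1 : ∃ v : V, a = g.orig v)
    (h2 : ∃ v : V, a ∈ g.P v) : False := by
  letI := g.fintypeVH; letI := g.decEqVH
  have hd := List.pairwise_iff_getElem.mp g.parts_disjoint 4 5 (by simp [GadgetData.parts])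
    (by simp [GadgetData.parts]) (by omega)
  simp only [GadgetData.parts, List.getElem_cons_succ, List.getElem_cons_zero] at hd
  exact Finset.disjoint_left.mp hd
    (by obtain ⟨v, hv⟩ := h1; exact Finset.mem_image.mpr ⟨v, Finset.mem_univ v, hv.symm⟩)
    (by obtain ⟨v, hv⟩ := h2; exact Finset.mem_biUnion.mpr ⟨v, Finset.mem_univ v, hv⟩)

lemma excl_4_6 (g : Gadget V G wt) {a : g.VH} (h1 : ∃ v : V, a = g.orig v)
    (h2 : ∃ e, e ∈ G.edgeFinset ∧ ∃ v, v ∈ e ∧ a = g.x e v) : False := by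
  letI := g.fintypeVH; letI := g.decEqVH
  have hd := List.pairwise_iff_getElem.mp g.parts_disjoint 4 6 (by simp [GadgetData.parts])
    (by simp [GadgetData.parts]) (by omega)
  simp only [GadgetData.parts, List.getElem_cons_succ, List.getElem_cons_zero] at hd
  exact Finset.disjoint_left.mp hd
    (by obtain ⟨v, hv⟩ := h1; exact Finset.mem_image.mpr ⟨v, Finset.mem_univ v, hv.symm⟩)
    (by obtain ⟨e, he, v, hv, hx⟩ := h2; unfold GadgetData.Xset; exact Finset.mem_biUnion.mpr ⟨e, he, Finset.mem_image.mpr ⟨v, Finset.mem_filter.mpr ⟨Finset.mem_univ v, hv⟩, hx.symm⟩⟩)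

lemma excl_4_7 (g : Gadget V G wt) {a : g.VH} (h1 : ∃ v : V, a = g.orig v)
    (h2 : ∃ e, e ∈ G.edgeFinset ∧ a ∈ g.Y e) : False := by
  letI := g.fintypeVH; letI := g.decEqVH
  have hd := List.pairwise_iff_getElem.mp g.parts_disjoint 4 7 (by simp [GadgetData.parts])
    (by simp [GadgetData.parts]) (by omega)
  simp only [GadgetData.parts, List.getElem_cons_succ, List.getElem_cons_zero] at hd
  exact Finset.disjoint_left.mp hd
    (by obtain ⟨v, hv⟩ := h1; exact Finset.mem_image.mpr ⟨v, Finset.mem_univ v, hv.symm⟩)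
    (by obtain ⟨e, he, hm⟩ := h2; exact Finset.mem_biUnion.mpr ⟨e, he, hm⟩)

lemma excl_4_8 (g : Gadget V G wt) {a : g.VH} (h1 : ∃ v : V, a = g.orig v)
    (h2 : ∃ e, e ∈ G.edgeFinset ∧ a ∈ g.Z e) : False := by
  letI := g.fintypeVH; letI := g.decEqVH
  have hd := List.pairwise_iff_getElem.mp g.parts_disjoint 4 8 (by simp [GadgetData.parts])
    (by simp [GadgetData.parts]) (by omega)
  simp only [GadgetData.parts, List.getElem_cons_succ, List.getElem_cons_zero] at hd
  exact Finset.disjoint_left.mp hd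
    (by obtain ⟨v, hv⟩ := h1; exact Finset.mem_image.mpr ⟨v, Finset.mem_univ v, hv.symm⟩)
    (by obtain ⟨e, he, hm⟩ := h2; exact Finset.mem_biUnion.mpr ⟨e, he, hm⟩)

lemma excl_4_9 (g : Gadget V G wt) {a : g.VH} (h1 : ∃ v : V, a = g.orig v)
    (h2 : ∃ e, e ∈ G.edgeFinset ∧ ∃ h : Fin 2, a = g.q e h) : False := by
  letI := g.fintypeVH; letI := g.decEqVH
  have hd := List.pairwise_iff_getElem.mp g.parts_disjoint 4 9 (by simp [GadgetData.parts])
    (by simp [GadgetData.parts]) (by omega)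
  simp only [GadgetData.parts, List.getElem_cons_succ, List.getElem_cons_zero] at hd
  exact Finset.disjoint_left.mp hd
    (by obtain ⟨v, hv⟩ := h1; exact Finset.mem_image.mpr ⟨v, Finset.mem_univ v, hv.symm⟩)
    (by obtain ⟨e, he, hh, hq⟩ := h2; unfold GadgetData.Qset; refine Finset.mem_biUnion.mpr ⟨e, he, ?_⟩; rcases fin2cases hh with rfl | rfl <;> simp [hq])

lemma excl_5_6 (g : Gadget V G wt) {a : g.VH} (h1 : ∃ v : V, a ∈ g.P v)
    (h2 : ∃ e, e ∈ G.edgeFinset ∧ ∃ v, v ∈ e ∧ a = g.x e v) : False := by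
  letI := g.fintypeVH; letI := g.decEqVH
  have hd := List.pairwise_iff_getElem.mp g.parts_disjoint 5 6 (by simp [GadgetData.parts])
    (by simp [GadgetData.parts]) (by omega)
  simp only [GadgetData.parts, List.getElem_cons_succ, List.getElem_cons_zero] at hd
  exact Finset.disjoint_left.mp hd
    (by obtain ⟨v, hv⟩ := h1; exact Finset.mem_biUnion.mpr ⟨v, Finset.mem_univ v, hv⟩)
    (by obtain ⟨e, he, v, hv, hx⟩ := h2; unfold GadgetData.Xset; exact Finset.mem_biUnion.mpr ⟨e, he, Finset.mem_image.mpr ⟨v, Finset.mem_filter.mpr ⟨Finset.mem_univ v, hv⟩, hx.symm⟩⟩)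

lemma excl_5_7 (g : Gadget V G wt) {a : g.VH} (h1 : ∃ v : V, a ∈ g.P v)
    (h2 : ∃ e, e ∈ G.edgeFinset ∧ a ∈ g.Y e) : False := by
  letI := g.fintypeVH; letI := g.decEqVH
  have hd := List.pairwise_iff_getElem.mp g.parts_disjoint 5 7 (by simp [GadgetData.parts])
    (by simp [GadgetData.parts]) (by omega)
  simp only [GadgetData.parts, List.getElem_cons_succ, List.getElem_cons_zero] at hd
  exact Finset.disjoint_left.mp hd
    (by obtain ⟨v, hv⟩ := h1; exact Finset.mem_biUnion.mpr ⟨v, Finset.mem_univ v, hv⟩)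
    (by obtain ⟨e, he, hm⟩ := h2; exact Finset.mem_biUnion.mpr ⟨e, he, hm⟩)

lemma excl_5_8 (g : Gadget V G wt) {a : g.VH} (h1 : ∃ v : V, a ∈ g.P v)
    (h2 : ∃ e, e ∈ G.edgeFinset ∧ a ∈ g.Z e) : False := by
  letI := g.fintypeVH; letI := g.decEqVH
  have hd := List.pairwise_iff_getElem.mp g.parts_disjoint 5 8 (by simp [GadgetData.parts])
    (by simp [GadgetData.parts]) (by omega)
  simp only [GadgetData.parts, List.getElem_cons_succ, List.getElem_cons_zero] at hd
  exact Finset.disjoint_left.mp hd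
    (by obtain ⟨v, hv⟩ := h1; exact Finset.mem_biUnion.mpr ⟨v, Finset.mem_univ v, hv⟩)
    (by obtain ⟨e, he, hm⟩ := h2; exact Finset.mem_biUnion.mpr ⟨e, he, hm⟩)

lemma excl_5_9 (g : Gadget V G wt) {a : g.VH} (h1 : ∃ v : V, a ∈ g.P v)
    (h2 : ∃ e, e ∈ G.edgeFinset ∧ ∃ h : Fin 2, a = g.q e h) : False := by
  letI := g.fintypeVH; letI := g.decEqVH
  have hd := List.pairwise_iff_getElem.mp g.parts_disjoint 5 9 (by simp [GadgetData.parts])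
    (by simp [GadgetData.parts]) (by omega)
  simp only [GadgetData.parts, List.getElem_cons_succ, List.getElem_cons_zero] at hd
  exact Finset.disjoint_left.mp hd
    (by obtain ⟨v, hv⟩ := h1; exact Finset.mem_biUnion.mpr ⟨v, Finset.mem_univ v, hv⟩)
    (by obtain ⟨e, he, hh, hq⟩ := h2; unfold GadgetData.Qset; refine Finset.mem_biUnion.mpr ⟨e, he, ?_⟩; rcases fin2cases hh with rfl | rfl <;> simp [hq])

lemma excl_6_7 (g : Gadget V G wt) {a : g.VH} (h1 : ∃ e, e ∈ G.edgeFinset ∧ ∃ v, v ∈ e ∧ a = g.x e v)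
    (h2 : ∃ e, e ∈ G.edgeFinset ∧ a ∈ g.Y e) : False := by
  letI := g.fintypeVH; letI := g.decEqVH
  have hd := List.pairwise_iff_getElem.mp g.parts_disjoint 6 7 (by simp [GadgetData.parts])
    (by simp [GadgetData.parts]) (by omega)
  simp only [GadgetData.parts, List.getElem_cons_succ, List.getElem_cons_zero] at hd
  exact Finset.disjoint_left.mp hd
    (by obtain ⟨e, he, v, hv, hx⟩ := h1; unfold GadgetData.Xset; exact Finset.mem_biUnion.mpr ⟨e, he, Finset.mem_image.mpr ⟨v, Finset.mem_filter.mpr ⟨Finset.mem_univ v, hv⟩, hx.symm⟩⟩)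
    (by obtain ⟨e, he, hm⟩ := h2; exact Finset.mem_biUnion.mpr ⟨e, he, hm⟩)

lemma excl_6_8 (g : Gadget V G wt) {a : g.VH} (h1 : ∃ e, e ∈ G.edgeFinset ∧ ∃ v, v ∈ e ∧ a = g.x e v)
    (h2 : ∃ e, e ∈ G.edgeFinset ∧ a ∈ g.Z e) : False := by
  letI := g.fintypeVH; letI := g.decEqVH
  have hd := List.pairwise_iff_getElem.mp g.parts_disjoint 6 8 (by simp [GadgetData.parts])
    (by simp [GadgetData.parts]) (by omega)
  simp only [GadgetData.parts, List.getElem_cons_succ, List.getElem_cons_zero] at hd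
  exact Finset.disjoint_left.mp hd
    (by obtain ⟨e, he, v, hv, hx⟩ := h1; unfold GadgetData.Xset; exact Finset.mem_biUnion.mpr ⟨e, he, Finset.mem_image.mpr ⟨v, Finset.mem_filter.mpr ⟨Finset.mem_univ v, hv⟩, hx.symm⟩⟩)
    (by obtain ⟨e, he, hm⟩ := h2; exact Finset.mem_biUnion.mpr ⟨e, he, hm⟩)

lemma excl_6_9 (g : Gadget V G wt) {a : g.VH} (h1 : ∃ e, e ∈ G.edgeFinset ∧ ∃ v, v ∈ e ∧ a = g.x e v)
    (h2 : ∃ e, e ∈ G.edgeFinset ∧ ∃ h : Fin 2, a = g.q e h) : False := by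
  letI := g.fintypeVH; letI := g.decEqVH
  have hd := List.pairwise_iff_getElem.mp g.parts_disjoint 6 9 (by simp [GadgetData.parts])
    (by simp [GadgetData.parts]) (by omega)
  simp only [GadgetData.parts, List.getElem_cons_succ, List.getElem_cons_zero] at hd
  exact Finset.disjoint_left.mp hd
    (by obtain ⟨e, he, v, hv, hx⟩ := h1; unfold GadgetData.Xset; exact Finset.mem_biUnion.mpr ⟨e, he, Finset.mem_image.mpr ⟨v, Finset.mem_filter.mpr ⟨Finset.mem_univ v, hv⟩, hx.symm⟩⟩)
    (by obtain ⟨e, he, hh, hq⟩ := h2; unfold GadgetData.Qset; refine Finset.mem_biUnion.mpr ⟨e, he, ?_⟩; rcases fin2cases hh with rfl | rfl <;> simp [hq])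

lemma excl_7_8 (g : Gadget V G wt) {a : g.VH} (h1 : ∃ e, e ∈ G.edgeFinset ∧ a ∈ g.Y e)
    (h2 : ∃ e, e ∈ G.edgeFinset ∧ a ∈ g.Z e) : False := by
  letI := g.fintypeVH; letI := g.decEqVH
  have hd := List.pairwise_iff_getElem.mp g.parts_disjoint 7 8 (by simp [GadgetData.parts])
    (by simp [GadgetData.parts]) (by omega)
  simp only [GadgetData.parts, List.getElem_cons_succ, List.getElem_cons_zero] at hd
  exact Finset.disjoint_left.mp hd
    (by obtain ⟨e, he, hm⟩ := h1; exact Finset.mem_biUnion.mpr ⟨e, he, hm⟩)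
    (by obtain ⟨e, he, hm⟩ := h2; exact Finset.mem_biUnion.mpr ⟨e, he, hm⟩)

lemma excl_7_9 (g : Gadget V G wt) {a : g.VH} (h1 : ∃ e, e ∈ G.edgeFinset ∧ a ∈ g.Y e)
    (h2 : ∃ e, e ∈ G.edgeFinset ∧ ∃ h : Fin 2, a = g.q e h) : False := by
  letI := g.fintypeVH; letI := g.decEqVH
  have hd := List.pairwise_iff_getElem.mp g.parts_disjoint 7 9 (by simp [GadgetData.parts])
    (by simp [GadgetData.parts]) (by omega)
  simp only [GadgetData.parts, List.getElem_cons_succ, List.getElem_cons_zero] at hd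
  exact Finset.disjoint_left.mp hd
    (by obtain ⟨e, he, hm⟩ := h1; exact Finset.mem_biUnion.mpr ⟨e, he, hm⟩)
    (by obtain ⟨e, he, hh, hq⟩ := h2; unfold GadgetData.Qset; refine Finset.mem_biUnion.mpr ⟨e, he, ?_⟩; rcases fin2cases hh with rfl | rfl <;> simp [hq])

lemma excl_8_9 (g : Gadget V G wt) {a : g.VH} (h1 : ∃ e, e ∈ G.edgeFinset ∧ a ∈ g.Z e)
    (h2 : ∃ e, e ∈ G.edgeFinset ∧ ∃ h : Fin 2, a = g.q e h) : False := by
  letI := g.fintypeVH; letI := g.decEqVH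
  have hd := List.pairwise_iff_getElem.mp g.parts_disjoint 8 9 (by simp [GadgetData.parts])
    (by simp [GadgetData.parts]) (by omega)
  simp only [GadgetData.parts, List.getElem_cons_succ, List.getElem_cons_zero] at hd
  exact Finset.disjoint_left.mp hd
    (by obtain ⟨e, he, hm⟩ := h1; exact Finset.mem_biUnion.mpr ⟨e, he, hm⟩)
    (by obtain ⟨e, he, hh, hq⟩ := h2; unfold GadgetData.Qset; refine Finset.mem_biUnion.mpr ⟨e, he, ?_⟩; rcases fin2cases hh with rfl | rfl <;> simp [hq])
lemma bvertex_sub_image {VH : Type*} {H : SimpleGraph VH} {k : ℕ} {c : VH → Fin k} {a : VH}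
    (hb : IsBVertex H c a) (S : Finset VH) (hS : ∀ b, H.Adj a b → b ∈ S) :
    k - 1 ≤ (S.image c).card := by
  have hsub : Finset.univ \ {c a} ⊆ S.image c := by
    intro col hcol
    rw [Finset.mem_sdiff, Finset.mem_singleton] at hcol
    obtain ⟨b, hab, hcb⟩ := hb col hcol.2
    exact Finset.mem_image.mpr ⟨b, hS b hab, hcb⟩
  have h := Finset.card_le_card hsub
  rwa [Finset.card_sdiff_of_subset (by simp), Finset.card_univ, Finset.card_singleton,
    Fintype.card_fin] at h

lemma not_bvertex_of_small {VH : Type*} {H : SimpleGraph VH} {k : ℕ} {c : VH → Fin k} {a : VH}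
    (S : Finset VH) (hS : ∀ b, H.Adj a b → b ∈ S) (hcard : S.card + 1 < k) :
    ¬ IsBVertex H c a := by
  intro hb
  have h1 := bvertex_sub_image hb S hS
  have h2 := Finset.card_image_le (s := S) (f := c)
  omega

lemma bvertex_injOn {VH : Type*} {H : SimpleGraph VH} {k : ℕ} {c : VH → Fin k} {a : VH}
    (hb : IsBVertex H c a) (S : Finset VH) (hS : ∀ b, H.Adj a b → b ∈ S)
    (hcard : S.card ≤ k - 1) :
    ∀ b1 ∈ S, ∀ b2 ∈ S, c b1 = c b2 → b1 = b2 := by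
  have h1 := bvertex_sub_image hb S hS
  have h2 := Finset.card_image_le (s := S) (f := c)
  have heq : (S.image c).card = S.card := le_antisymm h2 (by omega)
  exact fun b1 hb1 b2 hb2 h => Finset.injOn_of_card_image_eq heq hb1 hb2 h
lemma nbhd_sstar (g : Gadget V G wt) : ∀ b, g.H.Adj g.sstar b → b ∈ g.Sleaves := by
  intro b hadj
  rw [g.adj_iff] at hadj
  simp only [GadgetData.AdjSpec] at hadj
  rcases hadj with
    (⟨_, hb⟩ | ⟨s, hs, h1, _⟩ | ⟨v1, h1, _⟩ | ⟨e1, he1, v1, hv1, h1, _⟩ |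
     ⟨e1, he1, v1, hv1, h1, _⟩ | ⟨e1, he1, h1, _⟩ | ⟨e1, he1, hh, h1, _⟩) |
    (⟨hb1, hb2⟩ | ⟨s, hs, hb1, hb2⟩ | ⟨v1, hb1, hb2⟩ | ⟨e1, he1, v1, hv1, hb1, hL | hY⟩ |
     ⟨e1, he1, v1, hv1, hb1, hY | hZ | hL⟩ | ⟨e1, he1, hb1, hb2⟩ |
     ⟨e1, he1, hh, hb1, hZ | ⟨v1, hv1, hL⟩ | ⟨v1, hv1, hx⟩⟩)
  · exact hb
  · exact (excl_0_2 g rfl (by rw [h1]; exact hs)).elim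
  · exact (excl_0_4 g rfl ⟨v1, h1⟩).elim
  · exact (excl_0_4 g rfl ⟨v1, h1⟩).elim
  · exact (excl_0_6 g rfl ⟨e1, he1, v1, hv1, h1⟩).elim
  · exact (excl_0_9 g rfl ⟨e1, he1, 0, h1⟩).elim
  · exact (excl_0_9 g rfl ⟨e1, he1, hh, h1⟩).elim
  · exact (excl_0_1 g rfl hb2).elim
  · exact (excl_0_3 g rfl ⟨s, hs, hb2⟩).elim
  · exact (excl_0_5 g rfl ⟨v1, hb2⟩).elim
  · exact (excl_0_1 g rfl (g.L_subset e1 he1 v1 hv1 hL)).elim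
  · exact (excl_0_7 g rfl ⟨e1, he1, hY⟩).elim
  · exact (excl_0_7 g rfl ⟨e1, he1, hY⟩).elim
  · exact (excl_0_8 g rfl ⟨e1, he1, hZ⟩).elim
  · exact (excl_0_1 g rfl (g.L_subset e1 he1 v1 hv1 hL)).elim
  · exact (excl_0_9 g rfl ⟨e1, he1, 1, hb2⟩).elim
  · exact (excl_0_8 g rfl ⟨e1, he1, hZ⟩).elim
  · exact (excl_0_1 g rfl (g.L_subset e1 he1 v1 hv1 hL)).elim
  · exact (excl_0_6 g rfl ⟨e1, he1, v1, hv1, hx⟩).elim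
lemma nbhd_q (g : Gadget V G wt) {e : Sym2 V} (he : e ∈ G.edgeFinset) (h : Fin 2) :
    ∀ b, g.H.Adj (g.q e h) b →
      b ∈ g.Z e ∨ (∃ v, v ∈ e ∧ b ∈ g.L e v) ∨ (∃ v, v ∈ e ∧ b = g.x e v) ∨
        (∃ h' : Fin 2, h' ≠ h ∧ b = g.q e h') := by
  intro b hadj
  rw [g.adj_iff] at hadj
  simp only [GadgetData.AdjSpec] at hadj
  rcases hadj with
    (⟨h1, hb⟩ | ⟨s, hs, h1, _⟩ | ⟨v1, h1, _⟩ | ⟨e1, he1, v1, hv1, h1, _⟩ |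
     ⟨e1, he1, v1, hv1, h1, _⟩ | ⟨e1, he1, h1, hb⟩ | ⟨e1, he1, hh, h1, hb⟩) |
    (⟨hb1, hb2⟩ | ⟨s, hs, hb1, hb2⟩ | ⟨v1, hb1, hb2⟩ | ⟨e1, he1, v1, hv1, hb1, hL | hY⟩ |
     ⟨e1, he1, v1, hv1, hb1, hY | hZ | hL⟩ | ⟨e1, he1, hb1, hb2⟩ |
     ⟨e1, he1, hh, hb1, hZ | ⟨v1, hv1, hL⟩ | ⟨v1, hv1, hx⟩⟩)
  · exact (excl_0_9 g h1 ⟨e, he, h, rfl⟩).elim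
  · exact (excl_2_9 g (by rw [h1]; exact hs) ⟨e, he, h, rfl⟩).elim
  · exact (excl_4_9 g ⟨v1, h1⟩ ⟨e, he, h, rfl⟩).elim
  · exact (excl_4_9 g ⟨v1, h1⟩ ⟨e, he, h, rfl⟩).elim
  · exact (excl_6_9 g ⟨e1, he1, v1, hv1, h1⟩ ⟨e, he, h, rfl⟩).elim
  · have hpe := g.q_inj e he h e1 he1 0 h1
    rw [Prod.mk.injEq] at hpe
    obtain ⟨rfl, rfl⟩ := hpe
    exact Or.inr (Or.inr (Or.inr ⟨1, by decide, hb⟩))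
  · have hpe := g.q_inj e he h e1 he1 hh h1
    rw [Prod.mk.injEq] at hpe
    obtain ⟨rfl, rfl⟩ := hpe
    rcases hb with hZ | ⟨v1, hv1, hL⟩ | ⟨v1, hv1, hx⟩
    · exact Or.inl hZ
    · exact Or.inr (Or.inl ⟨v1, hv1, hL⟩)
    · exact Or.inr (Or.inr (Or.inl ⟨v1, hv1, hx⟩))
  · exact (excl_1_9 g hb2 ⟨e, he, h, rfl⟩).elim
  · exact (excl_3_9 g ⟨s, hs, hb2⟩ ⟨e, he, h, rfl⟩).elim
  · exact (excl_5_9 g ⟨v1, hb2⟩ ⟨e, he, h, rfl⟩).elim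
  · exact (excl_1_9 g (g.L_subset e1 he1 v1 hv1 hL) ⟨e, he, h, rfl⟩).elim
  · exact (excl_7_9 g ⟨e1, he1, hY⟩ ⟨e, he, h, rfl⟩).elim
  · exact (excl_7_9 g ⟨e1, he1, hY⟩ ⟨e, he, h, rfl⟩).elim
  · exact (excl_8_9 g ⟨e1, he1, hZ⟩ ⟨e, he, h, rfl⟩).elim
  · exact (excl_1_9 g (g.L_subset e1 he1 v1 hv1 hL) ⟨e, he, h, rfl⟩).elim
  · have hpe := g.q_inj e he h e1 he1 1 hb2
    rw [Prod.mk.injEq] at hpe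
    obtain ⟨rfl, rfl⟩ := hpe
    exact Or.inr (Or.inr (Or.inr ⟨0, by decide, hb1⟩))
  · exact (excl_8_9 g ⟨e1, he1, hZ⟩ ⟨e, he, h, rfl⟩).elim
  · exact (excl_1_9 g (g.L_subset e1 he1 v1 hv1 hL) ⟨e, he, h, rfl⟩).elim
  · exact (excl_6_9 g ⟨e1, he1, v1, hv1, hx⟩ ⟨e, he, h, rfl⟩).elim

lemma nbhd_x (g : Gadget V G wt) {e : Sym2 V} (he : e ∈ G.edgeFinset) {v : V} (hv : v ∈ e) :
    ∀ b, g.H.Adj (g.x e v) b →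
      b ∈ g.Y e ∨ b ∈ g.Z e ∨ b ∈ g.L e v ∨ ∃ h : Fin 2, b = g.q e h := by
  intro b hadj
  rw [g.adj_iff] at hadj
  simp only [GadgetData.AdjSpec] at hadj
  rcases hadj with
    (⟨h1, hb⟩ | ⟨s, hs, h1, _⟩ | ⟨v1, h1, _⟩ | ⟨e1, he1, v1, hv1, h1, _⟩ |
     ⟨e1, he1, v1, hv1, h1, hb⟩ | ⟨e1, he1, h1, hb⟩ | ⟨e1, he1, hh, h1, hb⟩) |
    (⟨hb1, hb2⟩ | ⟨s, hs, hb1, hb2⟩ | ⟨v1, hb1, hb2⟩ | ⟨e1, he1, v1, hv1, hb1, hL | hY⟩ |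
     ⟨e1, he1, v1, hv1, hb1, hY | hZ | hL⟩ | ⟨e1, he1, hb1, hb2⟩ |
     ⟨e1, he1, hh, hb1, hZ | ⟨v1, hv1, hL⟩ | ⟨v1, hv1, hx⟩⟩)
  · exact (excl_0_6 g h1 ⟨e, he, v, hv, rfl⟩).elim
  · exact (excl_2_6 g (by rw [h1]; exact hs) ⟨e, he, v, hv, rfl⟩).elim
  · exact (excl_4_6 g ⟨v1, h1⟩ ⟨e, he, v, hv, rfl⟩).elim
  · exact (excl_4_6 g ⟨v1, h1⟩ ⟨e, he, v, hv, rfl⟩).elim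
  · have hpe := g.x_inj e he v hv e1 he1 v1 hv1 h1
    rw [Prod.mk.injEq] at hpe
    obtain ⟨rfl, rfl⟩ := hpe
    rcases hb with hY | hZ | hL
    · exact Or.inl hY
    · exact Or.inr (Or.inl hZ)
    · exact Or.inr (Or.inr (Or.inl hL))
  · exact (excl_6_9 g ⟨e, he, v, hv, rfl⟩ ⟨e1, he1, 0, h1⟩).elim
  · exact (excl_6_9 g ⟨e, he, v, hv, rfl⟩ ⟨e1, he1, hh, h1⟩).elim
  · exact (excl_1_6 g hb2 ⟨e, he, v, hv, rfl⟩).elim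
  · exact (excl_3_6 g ⟨s, hs, hb2⟩ ⟨e, he, v, hv, rfl⟩).elim
  · exact (excl_5_6 g ⟨v1, hb2⟩ ⟨e, he, v, hv, rfl⟩).elim
  · exact (excl_1_6 g (g.L_subset e1 he1 v1 hv1 hL) ⟨e, he, v, hv, rfl⟩).elim
  · exact (excl_6_7 g ⟨e, he, v, hv, rfl⟩ ⟨e1, he1, hY⟩).elim
  · exact (excl_6_7 g ⟨e, he, v, hv, rfl⟩ ⟨e1, he1, hY⟩).elim
  · exact (excl_6_8 g ⟨e, he, v, hv, rfl⟩ ⟨e1, he1, hZ⟩).elim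
  · exact (excl_1_6 g (g.L_subset e1 he1 v1 hv1 hL) ⟨e, he, v, hv, rfl⟩).elim
  · exact (excl_6_9 g ⟨e, he, v, hv, rfl⟩ ⟨e1, he1, 1, hb2⟩).elim
  · exact (excl_6_8 g ⟨e, he, v, hv, rfl⟩ ⟨e1, he1, hZ⟩).elim
  · exact (excl_1_6 g (g.L_subset e1 he1 v1 hv1 hL) ⟨e, he, v, hv, rfl⟩).elim
  · have hpe := g.x_inj e he v hv e1 he1 v1 hv1 hx
    rw [Prod.mk.injEq] at hpe
    obtain ⟨rfl, rfl⟩ := hpe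
    exact Or.inr (Or.inr (Or.inr ⟨hh, hb1⟩))
lemma nbhd_Sleaf (g : Gadget V G wt) {l : g.VH} (hl : l ∈ g.Sleaves) :
    ∀ b, g.H.Adj l b → b = g.sstar ∨ ∃ e, e ∈ G.edgeFinset ∧ ∃ v, v ∈ e ∧ l ∈ g.L e v ∧
      (b = g.orig v ∨ b = g.x e v ∨ ∃ h : Fin 2, b = g.q e h) := by
  intro b hadj
  rw [g.adj_iff] at hadj
  simp only [GadgetData.AdjSpec] at hadj
  rcases hadj with
    (⟨h1, hb⟩ | ⟨s, hs, h1, _⟩ | ⟨v1, h1, _⟩ | ⟨e1, he1, v1, hv1, h1, _⟩ |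
     ⟨e1, he1, v1, hv1, h1, _⟩ | ⟨e1, he1, h1, _⟩ | ⟨e1, he1, hh, h1, _⟩) |
    (⟨hb1, hb2⟩ | ⟨s, hs, hb1, hb2⟩ | ⟨v1, hb1, hb2⟩ | ⟨e1, he1, v1, hv1, hb1, hL | hY⟩ |
     ⟨e1, he1, v1, hv1, hb1, hY | hZ | hL⟩ | ⟨e1, he1, hb1, hb2⟩ |
     ⟨e1, he1, hh, hb1, hZ | ⟨v1, hv1, hL⟩ | ⟨v1, hv1, hx⟩⟩)
  · exact (excl_0_1 g h1 hl).elim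
  · exact (excl_1_2 g hl (by rw [h1]; exact hs)).elim
  · exact (excl_1_4 g hl ⟨v1, h1⟩).elim
  · exact (excl_1_4 g hl ⟨v1, h1⟩).elim
  · exact (excl_1_6 g hl ⟨e1, he1, v1, hv1, h1⟩).elim
  · exact (excl_1_9 g hl ⟨e1, he1, 0, h1⟩).elim
  · exact (excl_1_9 g hl ⟨e1, he1, hh, h1⟩).elim
  · exact Or.inl hb1
  · exact (excl_1_3 g hl ⟨s, hs, hb2⟩).elim
  · exact (excl_1_5 g hl ⟨v1, hb2⟩).elim
  · exact Or.inr ⟨e1, he1, v1, hv1, hL, Or.inl hb1⟩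
  · exact (excl_1_7 g hl ⟨e1, he1, hY⟩).elim
  · exact (excl_1_7 g hl ⟨e1, he1, hY⟩).elim
  · exact (excl_1_8 g hl ⟨e1, he1, hZ⟩).elim
  · exact Or.inr ⟨e1, he1, v1, hv1, hL, Or.inr (Or.inl hb1)⟩
  · exact (excl_1_9 g hl ⟨e1, he1, 1, hb2⟩).elim
  · exact (excl_1_8 g hl ⟨e1, he1, hZ⟩).elim
  · exact Or.inr ⟨e1, he1, v1, hv1, hL, Or.inr (Or.inr ⟨hh, hb1⟩)⟩
  · exact (excl_1_6 g hl ⟨e1, he1, v1, hv1, hx⟩).elim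

lemma nbhd_Aleaf (g : Gadget V G wt) {s0 : g.VH} (hs0 : s0 ∈ g.Acenters) {l : g.VH}
    (hl : l ∈ g.Aleaves s0) : ∀ b, g.H.Adj l b → b = s0 := by
  intro b hadj
  rw [g.adj_iff] at hadj
  simp only [GadgetData.AdjSpec] at hadj
  rcases hadj with
    (⟨h1, hb⟩ | ⟨s, hs, h1, _⟩ | ⟨v1, h1, _⟩ | ⟨e1, he1, v1, hv1, h1, _⟩ |
     ⟨e1, he1, v1, hv1, h1, _⟩ | ⟨e1, he1, h1, _⟩ | ⟨e1, he1, hh, h1, _⟩) |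
    (⟨hb1, hb2⟩ | ⟨s, hs, hb1, hb2⟩ | ⟨v1, hb1, hb2⟩ | ⟨e1, he1, v1, hv1, hb1, hL | hY⟩ |
     ⟨e1, he1, v1, hv1, hb1, hY | hZ | hL⟩ | ⟨e1, he1, hb1, hb2⟩ |
     ⟨e1, he1, hh, hb1, hZ | ⟨v1, hv1, hL⟩ | ⟨v1, hv1, hx⟩⟩)
  · exact (excl_0_3 g h1 ⟨s0, hs0, hl⟩).elim
  · exact (excl_2_3 g (by rw [h1]; exact hs) ⟨s0, hs0, hl⟩).elim
  · exact (excl_3_4 g ⟨s0, hs0, hl⟩ ⟨v1, h1⟩).elim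
  · exact (excl_3_4 g ⟨s0, hs0, hl⟩ ⟨v1, h1⟩).elim
  · exact (excl_3_6 g ⟨s0, hs0, hl⟩ ⟨e1, he1, v1, hv1, h1⟩).elim
  · exact (excl_3_9 g ⟨s0, hs0, hl⟩ ⟨e1, he1, 0, h1⟩).elim
  · exact (excl_3_9 g ⟨s0, hs0, hl⟩ ⟨e1, he1, hh, h1⟩).elim
  · exact (excl_1_3 g hb2 ⟨s0, hs0, hl⟩).elim
  · by_cases hss : s = s0
    · rw [hb1, hss]
    · exact (Finset.disjoint_left.mp (g.Aleaves_disjoint s0 hs0 s hs (fun h => hss h.symm)) hl hb2).elim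
  · exact (excl_3_5 g ⟨s0, hs0, hl⟩ ⟨v1, hb2⟩).elim
  · exact (excl_1_3 g (g.L_subset e1 he1 v1 hv1 hL) ⟨s0, hs0, hl⟩).elim
  · exact (excl_3_7 g ⟨s0, hs0, hl⟩ ⟨e1, he1, hY⟩).elim
  · exact (excl_3_7 g ⟨s0, hs0, hl⟩ ⟨e1, he1, hY⟩).elim
  · exact (excl_3_8 g ⟨s0, hs0, hl⟩ ⟨e1, he1, hZ⟩).elim
  · exact (excl_1_3 g (g.L_subset e1 he1 v1 hv1 hL) ⟨s0, hs0, hl⟩).elim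
  · exact (excl_3_9 g ⟨s0, hs0, hl⟩ ⟨e1, he1, 1, hb2⟩).elim
  · exact (excl_3_8 g ⟨s0, hs0, hl⟩ ⟨e1, he1, hZ⟩).elim
  · exact (excl_1_3 g (g.L_subset e1 he1 v1 hv1 hL) ⟨s0, hs0, hl⟩).elim
  · exact (excl_3_6 g ⟨s0, hs0, hl⟩ ⟨e1, he1, v1, hv1, hx⟩).elim

lemma nbhd_P (g : Gadget V G wt) {v : V} {p : g.VH} (hp : p ∈ g.P v) :
    ∀ b, g.H.Adj p b → b = g.orig v := by
  intro b hadj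
  rw [g.adj_iff] at hadj
  simp only [GadgetData.AdjSpec] at hadj
  rcases hadj with
    (⟨h1, hb⟩ | ⟨s, hs, h1, _⟩ | ⟨v1, h1, _⟩ | ⟨e1, he1, v1, hv1, h1, _⟩ |
     ⟨e1, he1, v1, hv1, h1, _⟩ | ⟨e1, he1, h1, _⟩ | ⟨e1, he1, hh, h1, _⟩) |
    (⟨hb1, hb2⟩ | ⟨s, hs, hb1, hb2⟩ | ⟨v1, hb1, hb2⟩ | ⟨e1, he1, v1, hv1, hb1, hL | hY⟩ |
     ⟨e1, he1, v1, hv1, hb1, hY | hZ | hL⟩ | ⟨e1, he1, hb1, hb2⟩ |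
     ⟨e1, he1, hh, hb1, hZ | ⟨v1, hv1, hL⟩ | ⟨v1, hv1, hx⟩⟩)
  · exact (excl_0_5 g h1 ⟨v, hp⟩).elim
  · exact (excl_2_5 g (by rw [h1]; exact hs) ⟨v, hp⟩).elim
  · exact (excl_4_5 g ⟨v1, h1⟩ ⟨v, hp⟩).elim
  · exact (excl_4_5 g ⟨v1, h1⟩ ⟨v, hp⟩).elim
  · exact (excl_5_6 g ⟨v, hp⟩ ⟨e1, he1, v1, hv1, h1⟩).elim
  · exact (excl_5_9 g ⟨v, hp⟩ ⟨e1, he1, 0, h1⟩).elim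
  · exact (excl_5_9 g ⟨v, hp⟩ ⟨e1, he1, hh, h1⟩).elim
  · exact (excl_1_5 g hb2 ⟨v, hp⟩).elim
  · exact (excl_3_5 g ⟨s, hs, hb2⟩ ⟨v, hp⟩).elim
  · by_cases hvv : v1 = v
    · rw [hb1, hvv]
    · exact (Finset.disjoint_left.mp (g.P_disjoint v v1 (fun h => hvv h.symm)) hp hb2).elim
  · exact (excl_1_5 g (g.L_subset e1 he1 v1 hv1 hL) ⟨v, hp⟩).elim
  · exact (excl_5_7 g ⟨v, hp⟩ ⟨e1, he1, hY⟩).elim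
  · exact (excl_5_7 g ⟨v, hp⟩ ⟨e1, he1, hY⟩).elim
  · exact (excl_5_8 g ⟨v, hp⟩ ⟨e1, he1, hZ⟩).elim
  · exact (excl_1_5 g (g.L_subset e1 he1 v1 hv1 hL) ⟨v, hp⟩).elim
  · exact (excl_5_9 g ⟨v, hp⟩ ⟨e1, he1, 1, hb2⟩).elim
  · exact (excl_5_8 g ⟨v, hp⟩ ⟨e1, he1, hZ⟩).elim
  · exact (excl_1_5 g (g.L_subset e1 he1 v1 hv1 hL) ⟨v, hp⟩).elim
  · exact (excl_5_6 g ⟨v, hp⟩ ⟨e1, he1, v1, hv1, hx⟩).elim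

lemma nbhd_Y (g : Gadget V G wt) {e : Sym2 V} (he : e ∈ G.edgeFinset) {y : g.VH}
    (hy : y ∈ g.Y e) : ∀ b, g.H.Adj y b → ∃ v, v ∈ e ∧ (b = g.orig v ∨ b = g.x e v) := by
  intro b hadj
  rw [g.adj_iff] at hadj
  simp only [GadgetData.AdjSpec] at hadj
  rcases hadj with
    (⟨h1, hb⟩ | ⟨s, hs, h1, _⟩ | ⟨v1, h1, _⟩ | ⟨e1, he1, v1, hv1, h1, _⟩ |
     ⟨e1, he1, v1, hv1, h1, _⟩ | ⟨e1, he1, h1, _⟩ | ⟨e1, he1, hh, h1, _⟩) |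
    (⟨hb1, hb2⟩ | ⟨s, hs, hb1, hb2⟩ | ⟨v1, hb1, hb2⟩ | ⟨e1, he1, v1, hv1, hb1, hL | hY⟩ |
     ⟨e1, he1, v1, hv1, hb1, hY | hZ | hL⟩ | ⟨e1, he1, hb1, hb2⟩ |
     ⟨e1, he1, hh, hb1, hZ | ⟨v1, hv1, hL⟩ | ⟨v1, hv1, hx⟩⟩)
  · exact (excl_0_7 g h1 ⟨e, he, hy⟩).elim
  · exact (excl_2_7 g (by rw [h1]; exact hs) ⟨e, he, hy⟩).elim
  · exact (excl_4_7 g ⟨v1, h1⟩ ⟨e, he, hy⟩).elim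
  · exact (excl_4_7 g ⟨v1, h1⟩ ⟨e, he, hy⟩).elim
  · exact (excl_6_7 g ⟨e1, he1, v1, hv1, h1⟩ ⟨e, he, hy⟩).elim
  · exact (excl_7_9 g ⟨e, he, hy⟩ ⟨e1, he1, 0, h1⟩).elim
  · exact (excl_7_9 g ⟨e, he, hy⟩ ⟨e1, he1, hh, h1⟩).elim
  · exact (excl_1_7 g hb2 ⟨e, he, hy⟩).elim
  · exact (excl_3_7 g ⟨s, hs, hb2⟩ ⟨e, he, hy⟩).elim
  · exact (excl_5_7 g ⟨v1, hb2⟩ ⟨e, he, hy⟩).elim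
  · exact (excl_1_7 g (g.L_subset e1 he1 v1 hv1 hL) ⟨e, he, hy⟩).elim
  · by_cases hee : e1 = e
    · subst hee; exact ⟨v1, hv1, Or.inl hb1⟩
    · exact (Finset.disjoint_left.mp (g.Y_disjoint e1 he1 e he hee) hY hy).elim
  · by_cases hee : e1 = e
    · subst hee; exact ⟨v1, hv1, Or.inr hb1⟩
    · exact (Finset.disjoint_left.mp (g.Y_disjoint e1 he1 e he hee) hY hy).elim
  · exact (excl_7_8 g ⟨e, he, hy⟩ ⟨e1, he1, hZ⟩).elim
  · exact (excl_1_7 g (g.L_subset e1 he1 v1 hv1 hL) ⟨e, he, hy⟩).elim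
  · exact (excl_7_9 g ⟨e, he, hy⟩ ⟨e1, he1, 1, hb2⟩).elim
  · exact (excl_7_8 g ⟨e, he, hy⟩ ⟨e1, he1, hZ⟩).elim
  · exact (excl_1_7 g (g.L_subset e1 he1 v1 hv1 hL) ⟨e, he, hy⟩).elim
  · exact (excl_6_7 g ⟨e1, he1, v1, hv1, hx⟩ ⟨e, he, hy⟩).elim

lemma nbhd_Z (g : Gadget V G wt) {e : Sym2 V} (he : e ∈ G.edgeFinset) {z : g.VH}
    (hz : z ∈ g.Z e) :
    ∀ b, g.H.Adj z b → (∃ v, v ∈ e ∧ b = g.x e v) ∨ ∃ h : Fin 2, b = g.q e h := by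
  intro b hadj
  rw [g.adj_iff] at hadj
  simp only [GadgetData.AdjSpec] at hadj
  rcases hadj with
    (⟨h1, hb⟩ | ⟨s, hs, h1, _⟩ | ⟨v1, h1, _⟩ | ⟨e1, he1, v1, hv1, h1, _⟩ |
     ⟨e1, he1, v1, hv1, h1, _⟩ | ⟨e1, he1, h1, _⟩ | ⟨e1, he1, hh, h1, _⟩) |
    (⟨hb1, hb2⟩ | ⟨s, hs, hb1, hb2⟩ | ⟨v1, hb1, hb2⟩ | ⟨e1, he1, v1, hv1, hb1, hL | hY⟩ |
     ⟨e1, he1, v1, hv1, hb1, hY | hZ1 | hL⟩ | ⟨e1, he1, hb1, hb2⟩ |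
     ⟨e1, he1, hh, hb1, hZ1 | ⟨v1, hv1, hL⟩ | ⟨v1, hv1, hx⟩⟩)
  · exact (excl_0_8 g h1 ⟨e, he, hz⟩).elim
  · exact (excl_2_8 g (by rw [h1]; exact hs) ⟨e, he, hz⟩).elim
  · exact (excl_4_8 g ⟨v1, h1⟩ ⟨e, he, hz⟩).elim
  · exact (excl_4_8 g ⟨v1, h1⟩ ⟨e, he, hz⟩).elim
  · exact (excl_6_8 g ⟨e1, he1, v1, hv1, h1⟩ ⟨e, he, hz⟩).elim
  · exact (excl_8_9 g ⟨e, he, hz⟩ ⟨e1, he1, 0, h1⟩).elim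
  · exact (excl_8_9 g ⟨e, he, hz⟩ ⟨e1, he1, hh, h1⟩).elim
  · exact (excl_1_8 g hb2 ⟨e, he, hz⟩).elim
  · exact (excl_3_8 g ⟨s, hs, hb2⟩ ⟨e, he, hz⟩).elim
  · exact (excl_5_8 g ⟨v1, hb2⟩ ⟨e, he, hz⟩).elim
  · exact (excl_1_8 g (g.L_subset e1 he1 v1 hv1 hL) ⟨e, he, hz⟩).elim
  · exact (excl_7_8 g ⟨e1, he1, hY⟩ ⟨e, he, hz⟩).elim
  · exact (excl_7_8 g ⟨e1, he1, hY⟩ ⟨e, he, hz⟩).elim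
  · by_cases hee : e1 = e
    · subst hee; exact Or.inl ⟨v1, hv1, hb1⟩
    · exact (Finset.disjoint_left.mp (g.Z_disjoint e1 he1 e he hee) hZ1 hz).elim
  · exact (excl_1_8 g (g.L_subset e1 he1 v1 hv1 hL) ⟨e, he, hz⟩).elim
  · exact (excl_8_9 g ⟨e, he, hz⟩ ⟨e1, he1, 1, hb2⟩).elim
  · by_cases hee : e1 = e
    · subst hee; exact Or.inr ⟨hh, hb1⟩
    · exact (Finset.disjoint_left.mp (g.Z_disjoint e1 he1 e he hee) hZ1 hz).elim
  · exact (excl_1_8 g (g.L_subset e1 he1 v1 hv1 hL) ⟨e, he, hz⟩).elim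
  · exact (excl_6_8 g ⟨e1, he1, v1, hv1, hx⟩ ⟨e, he, hz⟩).elim

lemma adj_x_Y (g : Gadget V G wt) {e : Sym2 V} (he : e ∈ G.edgeFinset) {v : V} (hv : v ∈ e)
    {y : g.VH} (hy : y ∈ g.Y e) : g.H.Adj (g.x e v) y := by
  rw [g.adj_iff]
  exact Or.inl (Or.inr (Or.inr (Or.inr (Or.inr (Or.inl ⟨e, he, v, hv, rfl, Or.inl hy⟩)))))

lemma adj_q_x (g : Gadget V G wt) {e : Sym2 V} (he : e ∈ G.edgeFinset) {v : V} (hv : v ∈ e)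
    (h : Fin 2) : g.H.Adj (g.q e h) (g.x e v) := by
  rw [g.adj_iff]
  exact Or.inl (Or.inr (Or.inr (Or.inr (Or.inr (Or.inr (Or.inr ⟨e, he, h, rfl,
    Or.inr (Or.inr ⟨v, hv, rfl⟩)⟩))))))
lemma card_le_five {α : Type*} [DecidableEq α] (a b c d e : α) :
    ({a, b, c, d, e} : Finset α).card ≤ 5 := by
  have h1 := Finset.card_insert_le a ({b, c, d, e} : Finset α)
  have h2 := Finset.card_insert_le b ({c, d, e} : Finset α)
  have h3 := Finset.card_insert_le c ({d, e} : Finset α)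
  have h4 := Finset.card_insert_le d ({e} : Finset α)
  have h5 : ({e} : Finset α).card = 1 := Finset.card_singleton e
  omega

lemma card_le_four {α : Type*} [DecidableEq α] (a b c d : α) :
    ({a, b, c, d} : Finset α).card ≤ 4 := by
  have h2 := Finset.card_insert_le a ({b, c, d} : Finset α)
  have h3 := Finset.card_insert_le b ({c, d} : Finset α)
  have h4 := Finset.card_insert_le c ({d} : Finset α)
  have h5 : ({d} : Finset α).card = 1 := Finset.card_singleton d
  omega

lemma notb_Sleaf (g : Gadget V G wt) {k : ℕ} (hk : 7 ≤ k) (c : g.VH → Fin k) {l : g.VH}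
    (hl : l ∈ g.Sleaves) : ¬ IsBVertex g.H c l := by
  letI := g.decEqVH
  by_cases hL : ∃ e, e ∈ G.edgeFinset ∧ ∃ v, v ∈ e ∧ l ∈ g.L e v
  · obtain ⟨e0, he0, v0, hv0, hL0⟩ := hL
    refine not_bvertex_of_small
      ({g.sstar, g.orig v0, g.x e0 v0, g.q e0 0, g.q e0 1} : Finset g.VH) ?_ ?_
    · intro b hadj
      rcases nbhd_Sleaf g hl b hadj with rfl | ⟨e, he, v, hv, hL', hb⟩
      · simp
      · have hee : (e, v) = (e0, v0) := by
          by_contra hne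
          exact Finset.disjoint_left.mp (g.L_disjoint e he v hv e0 he0 v0 hv0 hne) hL' hL0
        rw [Prod.mk.injEq] at hee
        obtain ⟨rfl, rfl⟩ := hee
        rcases hb with rfl | rfl | ⟨h, rfl⟩
        · simp
        · simp
        · rcases fin2cases h with rfl | rfl <;> simp
    · have := card_le_five g.sstar (g.orig v0) (g.x e0 v0) (g.q e0 0) (g.q e0 1)
      omega
  · refine not_bvertex_of_small ({g.sstar} : Finset g.VH) ?_ ?_
    · intro b hadj
      rcases nbhd_Sleaf g hl b hadj with rfl | ⟨e, he, v, hv, hL', _⟩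
      · simp
      · exact absurd ⟨e, he, v, hv, hL'⟩ hL
    · simp only [Finset.card_singleton]; omega

lemma notb_Aleaf (g : Gadget V G wt) {k : ℕ} (hk : 7 ≤ k) (c : g.VH → Fin k) {s0 : g.VH}
    (hs0 : s0 ∈ g.Acenters) {l : g.VH} (hl : l ∈ g.Aleaves s0) : ¬ IsBVertex g.H c l := by
  letI := g.decEqVH
  refine not_bvertex_of_small ({s0} : Finset g.VH) ?_ ?_
  · intro b hadj
    rw [nbhd_Aleaf g hs0 hl b hadj]; simp
  · simp only [Finset.card_singleton]; omega

lemma notb_P (g : Gadget V G wt) {k : ℕ} (hk : 7 ≤ k) (c : g.VH → Fin k) {v : V} {p : g.VH}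
    (hp : p ∈ g.P v) : ¬ IsBVertex g.H c p := by
  letI := g.decEqVH
  refine not_bvertex_of_small ({g.orig v} : Finset g.VH) ?_ ?_
  · intro b hadj
    rw [nbhd_P g hp b hadj]; simp
  · simp only [Finset.card_singleton]; omega

lemma notb_Y (g : Gadget V G wt) {k : ℕ} (hk : 7 ≤ k) (c : g.VH → Fin k) {u v : V}
    (huv : G.Adj u v) {y : g.VH} (hy : y ∈ g.Y s(u, v)) : ¬ IsBVertex g.H c y := by
  letI := g.decEqVH
  have he : s(u, v) ∈ G.edgeFinset := by
    rw [SimpleGraph.mem_edgeFinset, SimpleGraph.mem_edgeSet]; exact huv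
  refine not_bvertex_of_small
    ({g.orig u, g.orig v, g.x s(u, v) u, g.x s(u, v) v} : Finset g.VH) ?_ ?_
  · intro b hadj
    obtain ⟨v1, hv1, hb⟩ := nbhd_Y g he hy b hadj
    rcases Sym2.mem_iff.mp hv1 with rfl | rfl <;> rcases hb with rfl | rfl <;> simp
  · have := card_le_four (g.orig u) (g.orig v) (g.x s(u, v) u) (g.x s(u, v) v)
    omega

lemma notb_Z (g : Gadget V G wt) {k : ℕ} (hk : 7 ≤ k) (c : g.VH → Fin k) {u v : V}
    (huv : G.Adj u v) {z : g.VH} (hz : z ∈ g.Z s(u, v)) : ¬ IsBVertex g.H c z := by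
  letI := g.decEqVH
  have he : s(u, v) ∈ G.edgeFinset := by
    rw [SimpleGraph.mem_edgeFinset, SimpleGraph.mem_edgeSet]; exact huv
  refine not_bvertex_of_small
    ({g.x s(u, v) u, g.x s(u, v) v, g.q s(u, v) 0, g.q s(u, v) 1} : Finset g.VH) ?_ ?_
  · intro b hadj
    rcases nbhd_Z g he hz b hadj with ⟨v1, hv1, rfl⟩ | ⟨h, rfl⟩
    · rcases Sym2.mem_iff.mp hv1 with rfl | rfl <;> simp
    · rcases fin2cases h with rfl | rfl <;> simp
  · have := card_le_four (g.x s(u, v) u) (g.x s(u, v) v) (g.q s(u, v) 0) (g.q s(u, v) 1)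
    omega

lemma bvertex_mem_bigSet (g : Gadget V G wt) {k : ℕ} (hk : 7 ≤ k) (c : g.VH → Fin k)
    {a : g.VH} (ha : IsBVertex g.H c a) : a ∈ g.toGadgetData.bigSet := by
  letI := g.fintypeVH; letI := g.decEqVH
  obtain ⟨p, hp, hap⟩ := g.parts_cover a
  unfold GadgetData.bigSet
  simp only [GadgetData.parts, List.mem_cons, List.not_mem_nil, or_false] at hp
  rcases hp with rfl | rfl | rfl | rfl | rfl | rfl | rfl | rfl | rfl | rfl
  · exact Finset.mem_union_left _ (Finset.mem_union_left _ (Finset.mem_union_left _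
      (Finset.mem_union_left _ hap)))
  · exact absurd ha (notb_Sleaf g hk c hap)
  · exact Finset.mem_union_left _ (Finset.mem_union_right _ hap)
  · obtain ⟨s, hs, h⟩ := Finset.mem_biUnion.mp hap
    exact absurd ha (notb_Aleaf g hk c hs h)
  · exact Finset.mem_union_left _ (Finset.mem_union_left _ (Finset.mem_union_left _
      (Finset.mem_union_right _ hap)))
  · obtain ⟨v, _, h⟩ := Finset.mem_biUnion.mp hap
    exact absurd ha (notb_P g hk c h)
  · exact Finset.mem_union_right _ hap
  · obtain ⟨e, he, h⟩ := Finset.mem_biUnion.mp hap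
    revert he h
    induction e using Sym2.ind with
    | _ u v =>
      intro he h
      have huv : G.Adj u v := by rwa [SimpleGraph.mem_edgeFinset, SimpleGraph.mem_edgeSet] at he
      exact absurd ha (notb_Y g hk c huv h)
  · obtain ⟨e, he, h⟩ := Finset.mem_biUnion.mp hap
    revert he h
    induction e using Sym2.ind with
    | _ u v =>
      intro he h
      have huv : G.Adj u v := by rwa [SimpleGraph.mem_edgeFinset, SimpleGraph.mem_edgeSet] at he
      exact absurd ha (notb_Z g hk c huv h)
  · exact Finset.mem_union_left _ (Finset.mem_union_left _ (Finset.mem_union_right _ hap))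
lemma filter_mem_card_le (e : Sym2 V) (he : e ∈ G.edgeFinset) :
    (Finset.univ.filter (fun v : V => v ∈ e)).card ≤ 2 := by
  revert he
  induction e using Sym2.ind with
  | _ u v =>
    intro _
    have hsub : (Finset.univ.filter (fun w : V => w ∈ s(u, v))) ⊆ {u, v} := by
      intro w hw
      rw [Finset.mem_filter] at hw
      rcases Sym2.mem_iff.mp hw.2 with rfl | rfl <;> simp
    have h2 := Finset.card_insert_le u ({v} : Finset V)
    have h3 : ({v} : Finset V).card = 1 := Finset.card_singleton v
    have := Finset.card_le_card hsub
    omega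

lemma bigSet_card_le (g : Gadget V G wt) :
    g.toGadgetData.bigSet.card ≤ numColors G wt + G.edgeFinset.card := by
  letI := g.fintypeVH; letI := g.decEqVH
  unfold GadgetData.bigSet
  have h1 : (({g.sstar} : Finset g.VH) ∪ Finset.univ.image g.orig ∪ g.toGadgetData.Qset
      ∪ g.Acenters ∪ g.toGadgetData.Xset).card ≤
      (({g.sstar} : Finset g.VH) ∪ Finset.univ.image g.orig ∪ g.toGadgetData.Qset
      ∪ g.Acenters).card + g.toGadgetData.Xset.card := Finset.card_union_le _ _
  have h2 := Finset.card_union_le (({g.sstar} : Finset g.VH) ∪ Finset.univ.image g.orig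
      ∪ g.toGadgetData.Qset) g.Acenters
  have h3 := Finset.card_union_le (({g.sstar} : Finset g.VH) ∪ Finset.univ.image g.orig)
      g.toGadgetData.Qset
  have h4 := Finset.card_union_le ({g.sstar} : Finset g.VH) (Finset.univ.image g.orig)
  have h5 : ({g.sstar} : Finset g.VH).card = 1 := Finset.card_singleton _
  have h6 : (Finset.univ.image g.orig).card ≤ Fintype.card V :=
    le_trans (Finset.card_image_le) (by rw [Finset.card_univ])
  have hQ : g.toGadgetData.Qset.card ≤ 2 * G.edgeFinset.card := by
    unfold GadgetData.Qset
    refine le_trans Finset.card_biUnion_le (le_trans (Finset.sum_le_sum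
      (g := fun _ => 2) (fun e _ => ?_)) ?_)
    · have := Finset.card_insert_le (g.q e 0) ({g.q e 1} : Finset g.VH)
      have h0 : ({g.q e 1} : Finset g.VH).card = 1 := Finset.card_singleton _
      show _ ≤ 2
      omega
    · rw [Finset.sum_const, smul_eq_mul]; omega
  have hX : g.toGadgetData.Xset.card ≤ 2 * G.edgeFinset.card := by
    unfold GadgetData.Xset
    refine le_trans Finset.card_biUnion_le (le_trans (Finset.sum_le_sum
      (g := fun _ => 2) (fun e he => le_trans Finset.card_image_le
      (filter_mem_card_le e he))) ?_)
    rw [Finset.sum_const, smul_eq_mul]; omega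
  have hA := g.card_Acenters
  unfold numColors
  omega

lemma key_lemma (g : Gadget V G wt) {c : g.VH → Fin (numColors G wt)}
    (hprop : ∀ ⦃a b : g.VH⦄, g.H.Adj a b → c a ≠ c b)
    (hwt : ∀ e ∈ G.edgeFinset, 1 ≤ wt e) {u v : V} (huv : G.Adj u v)
    (h1 : IsBVertex g.H c (g.x s(u, v) u)) (h2 : IsBVertex g.H c (g.x s(u, v) v))
    (h3 : IsBVertex g.H c (g.q s(u, v) 0)) : False := by
  letI := g.decEqVH
  set e := s(u, v) with hedef
  have he : e ∈ G.edgeFinset := by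
    rw [SimpleGraph.mem_edgeFinset, SimpleGraph.mem_edgeSet]; exact huv
  have hu : u ∈ e := Sym2.mem_iff.mpr (Or.inl rfl)
  have hv : v ∈ e := Sym2.mem_iff.mpr (Or.inr rfl)
  obtain ⟨y, hy⟩ : (g.Y e).Nonempty := Finset.card_pos.mp (by
    rw [g.card_Y e he]; exact lt_of_lt_of_le Nat.zero_lt_one (hwt e he))
  have hZc := g.card_Z e he
  have hYc := g.card_Y e he
  have hLu := g.card_L e he u hu
  have hLv := g.card_L e he v hv
  have hq2 : ({g.q e 0, g.q e 1} : Finset g.VH).card ≤ 2 := by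
    have := Finset.card_insert_le (g.q e 0) ({g.q e 1} : Finset g.VH)
    have h0 : ({g.q e 1} : Finset g.VH).card = 1 := Finset.card_singleton _
    omega
  -- the rainbow sets
  have mkS : ∀ w : V, w ∈ e →
      (g.Y e ∪ g.Z e ∪ g.L e w ∪ {g.q e 0, g.q e 1}).card ≤ numColors G wt - 1 := by
    intro w hw
    have c1 := Finset.card_union_le (g.Y e ∪ g.Z e ∪ g.L e w)
      ({g.q e 0, g.q e 1} : Finset g.VH)
    have c2 := Finset.card_union_le (g.Y e ∪ g.Z e) (g.L e w)
    have c3 := Finset.card_union_le (g.Y e) (g.Z e)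
    have hLw := g.card_L e he w hw
    omega
  have hSmem : ∀ w : V, w ∈ e → ∀ b, g.H.Adj (g.x e w) b →
      b ∈ g.Y e ∪ g.Z e ∪ g.L e w ∪ {g.q e 0, g.q e 1} := by
    intro w hw b hadj
    rcases nbhd_x g he hw b hadj with hY | hZ | hL | ⟨h, rfl⟩
    · simp [hY]
    · simp [hZ]
    · simp [hL]
    · rcases fin2cases h with rfl | rfl <;> simp
  have inju := bvertex_injOn h1 _ (hSmem u hu) (mkS u hu)
  have injv := bvertex_injOn h2 _ (hSmem v hv) (mkS v hv)
  have hySu : y ∈ g.Y e ∪ g.Z e ∪ g.L e u ∪ {g.q e 0, g.q e 1} := by simp [hy]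
  have hySv : y ∈ g.Y e ∪ g.Z e ∪ g.L e v ∪ {g.q e 0, g.q e 1} := by simp [hy]
  have hyq : ∀ h : Fin 2, y ≠ g.q e h := fun h hq =>
    excl_7_9 g ⟨e, he, hy⟩ ⟨e, he, h, hq⟩
  have ncy0 : c y ≠ c (g.q e 0) := fun hcc =>
    hyq 0 (inju y hySu (g.q e 0) (by simp) hcc)
  have ncy1 : c y ≠ c (g.q e 1) := fun hcc =>
    hyq 1 (inju y hySu (g.q e 1) (by simp) hcc)
  have ncyxu : c y ≠ c (g.x e u) := fun h => hprop (adj_x_Y g he hu hy) h.symm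
  have ncyxv : c y ≠ c (g.x e v) := fun h => hprop (adj_x_Y g he hv hy) h.symm
  obtain ⟨z, hzadj, hzc⟩ := h3 (c y) ncy0
  rcases nbhd_q g he 0 z hzadj with hZ | ⟨v1, hv1, hL⟩ | ⟨v1, hv1, rfl⟩ | ⟨h', hne0, rfl⟩
  · have hzy : z = y := inju z (by simp [hZ]) y hySu hzc
    exact excl_7_8 g ⟨e, he, hy⟩ ⟨e, he, hzy ▸ hZ⟩
  · rcases Sym2.mem_iff.mp hv1 with rfl | rfl
    · have hzy : z = y := inju z (by simp [hL]) y hySu hzc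
      exact excl_1_7 g (g.L_subset e he _ hv1 (hzy ▸ hL)) ⟨e, he, hy⟩
    · have hzy : z = y := injv z (by simp [hL]) y hySv hzc
      exact excl_1_7 g (g.L_subset e he _ hv1 (hzy ▸ hL)) ⟨e, he, hy⟩
  · rcases Sym2.mem_iff.mp hv1 with rfl | rfl
    · exact ncyxu hzc.symm
    · exact ncyxv hzc.symm
  · rcases fin2cases h' with rfl | rfl
    · exact hne0 rfl
    · exact ncy1 hzc.symm
lemma sstar_bvertex (g : Gadget V G wt) (c : g.VH → Fin (numColors G wt))
    (hc : IsBColoring g.H (numColors G wt) c) (hwt : ∀ e ∈ G.edgeFinset, 1 ≤ wt e)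
    (hk : 7 ≤ numColors G wt) : IsBVertex g.H c g.sstar := by
  by_contra hns
  choose f hf using hc.2.2
  have hfc : ∀ col, c (f col) = col := fun col => (hf col).1
  have hfb : ∀ col, IsBVertex g.H c (f col) := fun col => (hf col).2
  have hedge : ∀ e : Sym2 V, ∃ a : g.VH, e ∈ G.edgeFinset →
      (((∃ w, w ∈ e ∧ a = g.x e w) ∨ a = g.q e 0) ∧ ¬ IsBVertex g.H c a) := by
    intro e
    induction e using Sym2.ind with
    | _ u v =>
      by_cases he : s(u, v) ∈ G.edgeFinset
      · have huv : G.Adj u v := by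
          rwa [SimpleGraph.mem_edgeFinset, SimpleGraph.mem_edgeSet] at he
        by_cases hbu : IsBVertex g.H c (g.x s(u, v) u)
        · by_cases hbv : IsBVertex g.H c (g.x s(u, v) v)
          · exact ⟨g.q s(u, v) 0, fun _ => ⟨Or.inr rfl,
              fun hq => key_lemma g hc.1 hwt huv hbu hbv hq⟩⟩
          · exact ⟨g.x s(u, v) v, fun _ =>
              ⟨Or.inl ⟨v, Sym2.mem_iff.mpr (Or.inr rfl), rfl⟩, hbv⟩⟩
        · exact ⟨g.x s(u, v) u, fun _ =>
            ⟨Or.inl ⟨u, Sym2.mem_iff.mpr (Or.inl rfl), rfl⟩, hbu⟩⟩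
      · exact ⟨g.sstar, fun h => absurd h he⟩
  choose φ hφ using hedge
  letI := g.fintypeVH; letI := g.decEqVH
  have hTsub : (Finset.univ.image f ∪ G.edgeFinset.image φ) ∪ {g.sstar} ⊆
      g.toGadgetData.bigSet := by
    intro a ha
    rcases Finset.mem_union.mp ha with ha | ha
    · rcases Finset.mem_union.mp ha with ha | ha
      · obtain ⟨col, _, rfl⟩ := Finset.mem_image.mp ha
        exact bvertex_mem_bigSet g hk c (hfb col)
      · obtain ⟨e, he, rfl⟩ := Finset.mem_image.mp ha
        rcases (hφ e he).1 with ⟨w, hw, hxw⟩ | hq0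
        · unfold GadgetData.bigSet
          refine Finset.mem_union_right _ ?_
          unfold GadgetData.Xset
          exact Finset.mem_biUnion.mpr ⟨e, he, Finset.mem_image.mpr ⟨w,
            Finset.mem_filter.mpr ⟨Finset.mem_univ w, hw⟩, hxw.symm⟩⟩
        · unfold GadgetData.bigSet
          refine Finset.mem_union_left _ (Finset.mem_union_left _
            (Finset.mem_union_right _ ?_))
          unfold GadgetData.Qset
          exact Finset.mem_biUnion.mpr ⟨e, he, by rw [hq0]; simp⟩
    · rw [Finset.mem_singleton] at ha
      subst ha
      unfold GadgetData.bigSet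
      exact Finset.mem_union_left _ (Finset.mem_union_left _ (Finset.mem_union_left _
        (Finset.mem_union_left _ (Finset.mem_singleton_self _))))
  have hfinj : Function.Injective f := fun a b h => by rw [← hfc a, ← hfc b, h]
  have cardf : (Finset.univ.image f).card = numColors G wt := by
    rw [Finset.card_image_of_injective _ hfinj, Finset.card_univ, Fintype.card_fin]
  have cardφ : (G.edgeFinset.image φ).card = G.edgeFinset.card := by
    apply Finset.card_image_of_injOn
    intro e1 he1 e2 he2 heq
    rcases (hφ e1 he1).1 with ⟨w1, hw1, hx1⟩ | hq1 <;>
      rcases (hφ e2 he2).1 with ⟨w2, hw2, hx2⟩ | hq2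
    · have hx : g.x e1 w1 = g.x e2 w2 := by rw [← hx1, ← hx2, heq]
      have := g.x_inj e1 he1 w1 hw1 e2 he2 w2 hw2 hx
      rw [Prod.mk.injEq] at this; exact this.1
    · exact (excl_6_9 g ⟨e1, he1, w1, hw1, hx1⟩ ⟨e2, he2, 0, heq.trans hq2⟩).elim
    · exact (excl_6_9 g ⟨e2, he2, w2, hw2, heq.trans hx2⟩ ⟨e1, he1, 0, hq1⟩).elim
    · have hx : g.q e1 0 = g.q e2 0 := by rw [← hq1, ← hq2, heq]
      have := g.q_inj e1 he1 0 e2 he2 0 hx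
      rw [Prod.mk.injEq] at this; exact this.1
  have disj1 : Disjoint (Finset.univ.image f) (G.edgeFinset.image φ) := by
    rw [Finset.disjoint_left]
    intro a haf haφ
    obtain ⟨col, _, hcol⟩ := Finset.mem_image.mp haf
    obtain ⟨e, he, hφe⟩ := Finset.mem_image.mp haφ
    exact (hφ e he).2 (by rw [hφe]; exact hcol ▸ hfb col)
  have disj2 : Disjoint (Finset.univ.image f ∪ G.edgeFinset.image φ)
      ({g.sstar} : Finset g.VH) := by
    rw [Finset.disjoint_right]
    intro a ha hau
    rw [Finset.mem_singleton] at ha; subst ha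
    rcases Finset.mem_union.mp hau with h | h
    · obtain ⟨col, _, hcol⟩ := Finset.mem_image.mp h
      exact hns (hcol ▸ hfb col)
    · obtain ⟨e, he, hφe⟩ := Finset.mem_image.mp h
      rcases (hφ e he).1 with ⟨w, hw, hxw⟩ | hq0
      · exact excl_0_6 g (a := g.sstar) rfl ⟨e, he, w, hw, by rw [← hφe]; exact hxw⟩
      · exact excl_0_9 g (a := g.sstar) rfl ⟨e, he, 0, by rw [← hφe]; exact hq0⟩
  have hcard := Finset.card_le_card hTsub
  rw [Finset.card_union_of_disjoint disj2, Finset.card_union_of_disjoint disj1, cardf,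
    cardφ, Finset.card_singleton] at hcard
  have := bigSet_card_le g
  omega

end Aux
/-- In any b-coloring of `H` with `k` colors, the color sets
`C_{e,v}` of the sets `L_{e,v}` are pairwise disjoint. -/
theorem L_color_sets_disjoint
    {V : Type*} [Fintype V] [DecidableEq V] (G : SimpleGraph V) [DecidableRel G.Adj]
    (wt : Sym2 V → ℕ) (hconn : G.Connected)
    (hwt : ∀ e ∈ G.edgeFinset, 1 ≤ wt e)
    (heven : ∀ v : V, Even (vertW G wt v))
    (g : Gadget V G wt)
    (c : g.VH → Fin (numColors G wt)) (hc : IsBColoring g.H (numColors G wt) c) :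
    ∀ e ∈ G.edgeFinset, ∀ v : V, v ∈ e → ∀ e' ∈ G.edgeFinset, ∀ v' : V, v' ∈ e' →
      (e, v) ≠ (e', v') →
      Disjoint ((g.L e v).image c) ((g.L e' v').image c) := by
  intro e he v hv e' he' v' hv' hne
  have hm : 1 ≤ G.edgeFinset.card := Finset.card_pos.mpr ⟨e, he⟩
  have hW : 1 ≤ totW G wt :=
    le_trans (hwt e he) (Finset.single_le_sum (fun i _ => Nat.zero_le _) he)
  have hk : 7 ≤ numColors G wt := by unfold numColors; omega
  have hsb := sstar_bvertex g c hc hwt hk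
  have hinj := bvertex_injOn hsb g.Sleaves (nbhd_sstar g) (le_of_eq g.card_Sleaves)
  rw [Finset.disjoint_left]
  intro col hcol hcol'
  obtain ⟨l, hl, hcl⟩ := Finset.mem_image.mp hcol
  obtain ⟨l', hl', hcl'⟩ := Finset.mem_image.mp hcol'
  have hll : l = l' := hinj l (g.L_subset e he v hv hl) l' (g.L_subset e' he' v' hv' hl')
    (hcl.trans hcl'.symm)
  exact Finset.disjoint_left.mp (g.L_disjoint e he v hv e' he' v' hv' hne) hl (hll ▸ hl')
end

section
/- Fix any b-coloring of the constructed graph H with k colors, and for each incident pair (e, v) let C_{e,v} be the set of colors appearing on the vertices of L_{e,v}. Then for each edge e = uv of G, either all colors of C_{e,u} appear on Y_e or all colors of C_{e,v} appear on Y_e; specifically, the colors C_{e,u} appear on Y_e if x_{e,v} is a b-vertex, and the colors C_{e,v} appear on Y_e if x_{e,u} is a b-vertex. -/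
open Finset

variable {V : Type*} [Fintype V] [DecidableEq V]

section AuxBcol
open Finset

lemma bcol_card_le {VH : Type*} [DecidableEq VH] {k : ℕ} {H : SimpleGraph VH}
    {c : VH → Fin k} {a : VH} (hb : IsBVertex H c a) {s : Finset VH}
    (hs : ∀ b, H.Adj a b → b ∈ s) : k - 1 ≤ s.card := by
  have h1 : (Finset.univ.erase (c a)).card ≤ (s.image c).card := by
    apply Finset.card_le_card
    intro col hcol
    obtain ⟨b, hb1, hb2⟩ := hb col (Finset.ne_of_mem_erase hcol)
    exact Finset.mem_image.mpr ⟨b, hs b hb1, hb2⟩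
  have h2 := Finset.card_image_le (s := s) (f := c)
  have h3 : (Finset.univ.erase (c a)).card = k - 1 := by
    rw [Finset.card_erase_of_mem (Finset.mem_univ _)]; simp
  omega

lemma two_collisions {VH : Type*} [DecidableEq VH] {k : ℕ} (c : VH → Fin k)
    (s : Finset VH) (q : VH) (hcard : s.card = k)
    (hprop : ∀ a ∈ s, c a ≠ c q)
    (hfull : ∀ col : Fin k, col ≠ c q → ∃ a ∈ s, c a = col)
    {a1 b1 a2 b2 : VH}
    (ha1 : a1 ∈ s) (hb1 : b1 ∈ s) (h1 : a1 ≠ b1) (hc1 : c a1 = c b1)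
    (ha2 : a2 ∈ s) (hb2 : b2 ∈ s) (h2 : a2 ≠ b2) (hc2 : c a2 = c b2)
    (hne : c a1 ≠ c a2) : False := by
  have hb12 : b1 ≠ b2 := by
    intro h; apply hne; rw [hc1, hc2, h]
  have ha1b2 : a1 ≠ b2 := by
    intro h; apply hne; rw [hc2, ← h]
  have ha2b1 : a2 ≠ b1 := by
    intro h; apply hne; rw [hc1, ← h]
  set t := (s.erase b1).erase b2 with ht
  have htcard : t.card = k - 2 := by
    rw [ht, Finset.card_erase_of_mem (Finset.mem_erase.mpr ⟨hb12.symm, hb2⟩),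
      Finset.card_erase_of_mem hb1, hcard]
    omega
  have hsub : Finset.univ.erase (c q) ⊆ t.image c := by
    intro col hcol
    obtain ⟨a, ha, hca⟩ := hfull col (Finset.ne_of_mem_erase hcol)
    rcases eq_or_ne a b1 with rfl | hab1
    · exact Finset.mem_image.mpr ⟨a1, Finset.mem_erase.mpr ⟨ha1b2,
        Finset.mem_erase.mpr ⟨h1, ha1⟩⟩, hc1.trans hca⟩
    rcases eq_or_ne a b2 with rfl | hab2
    · exact Finset.mem_image.mpr ⟨a2, Finset.mem_erase.mpr ⟨h2,
        Finset.mem_erase.mpr ⟨ha2b1, ha2⟩⟩, hc2.trans hca⟩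
    · exact Finset.mem_image.mpr ⟨a, Finset.mem_erase.mpr ⟨hab2,
        Finset.mem_erase.mpr ⟨hab1, ha⟩⟩, hca⟩
  have hk2 : 2 ≤ k := by
    have : Nontrivial (Fin k) := ⟨c a1, c a2, hne⟩
    have := Fintype.one_lt_card (α := Fin k)
    exact (by simpa using this : 1 < k)
  have := (Finset.card_le_card hsub).trans ((Finset.card_image_le).trans htcard.le)
  rw [Finset.card_erase_of_mem (Finset.mem_univ _)] at this
  simp at this
  omega

end AuxBcol
section Aux2
open Finset
variable {V : Type*} [Fintype V] [DecidableEq V] {G : SimpleGraph V} [DecidableRel G.Adj]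
  {wt : Sym2 V → ℕ}

lemma gdisj (g : Gadget V G wt) :
    letI := g.fintypeVH; letI := g.decEqVH;
    Disjoint ({g.sstar} : Finset g.VH) g.Sleaves ∧
    Disjoint ({g.sstar} : Finset g.VH) g.Acenters ∧
    Disjoint ({g.sstar} : Finset g.VH) (g.Acenters.biUnion g.Aleaves) ∧
    Disjoint ({g.sstar} : Finset g.VH) (Finset.univ.image g.orig) ∧
    Disjoint ({g.sstar} : Finset g.VH) (Finset.univ.biUnion g.P) ∧
    Disjoint ({g.sstar} : Finset g.VH) g.Xset ∧
    Disjoint ({g.sstar} : Finset g.VH) (G.edgeFinset.biUnion g.Y) ∧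
    Disjoint ({g.sstar} : Finset g.VH) (G.edgeFinset.biUnion g.Z) ∧
    Disjoint ({g.sstar} : Finset g.VH) g.Qset ∧
    Disjoint g.Sleaves g.Acenters ∧
    Disjoint g.Sleaves (g.Acenters.biUnion g.Aleaves) ∧
    Disjoint g.Sleaves (Finset.univ.image g.orig) ∧
    Disjoint g.Sleaves (Finset.univ.biUnion g.P) ∧
    Disjoint g.Sleaves g.Xset ∧
    Disjoint g.Sleaves (G.edgeFinset.biUnion g.Y) ∧
    Disjoint g.Sleaves (G.edgeFinset.biUnion g.Z) ∧
    Disjoint g.Sleaves g.Qset ∧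
    Disjoint g.Acenters (g.Acenters.biUnion g.Aleaves) ∧
    Disjoint g.Acenters (Finset.univ.image g.orig) ∧
    Disjoint g.Acenters (Finset.univ.biUnion g.P) ∧
    Disjoint g.Acenters g.Xset ∧
    Disjoint g.Acenters (G.edgeFinset.biUnion g.Y) ∧
    Disjoint g.Acenters (G.edgeFinset.biUnion g.Z) ∧
    Disjoint g.Acenters g.Qset ∧
    Disjoint (g.Acenters.biUnion g.Aleaves) (Finset.univ.image g.orig) ∧
    Disjoint (g.Acenters.biUnion g.Aleaves) (Finset.univ.biUnion g.P) ∧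
    Disjoint (g.Acenters.biUnion g.Aleaves) g.Xset ∧
    Disjoint (g.Acenters.biUnion g.Aleaves) (G.edgeFinset.biUnion g.Y) ∧
    Disjoint (g.Acenters.biUnion g.Aleaves) (G.edgeFinset.biUnion g.Z) ∧
    Disjoint (g.Acenters.biUnion g.Aleaves) g.Qset ∧
    Disjoint (Finset.univ.image g.orig) (Finset.univ.biUnion g.P) ∧
    Disjoint (Finset.univ.image g.orig) g.Xset ∧
    Disjoint (Finset.univ.image g.orig) (G.edgeFinset.biUnion g.Y) ∧
    Disjoint (Finset.univ.image g.orig) (G.edgeFinset.biUnion g.Z) ∧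
    Disjoint (Finset.univ.image g.orig) g.Qset ∧
    Disjoint (Finset.univ.biUnion g.P) g.Xset ∧
    Disjoint (Finset.univ.biUnion g.P) (G.edgeFinset.biUnion g.Y) ∧
    Disjoint (Finset.univ.biUnion g.P) (G.edgeFinset.biUnion g.Z) ∧
    Disjoint (Finset.univ.biUnion g.P) g.Qset ∧
    Disjoint g.Xset (G.edgeFinset.biUnion g.Y) ∧
    Disjoint g.Xset (G.edgeFinset.biUnion g.Z) ∧
    Disjoint g.Xset g.Qset ∧
    Disjoint (G.edgeFinset.biUnion g.Y) (G.edgeFinset.biUnion g.Z) ∧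
    Disjoint (G.edgeFinset.biUnion g.Y) g.Qset ∧
    Disjoint (G.edgeFinset.biUnion g.Z) g.Qset := by
  letI := g.fintypeVH; letI := g.decEqVH
  have hpd := g.parts_disjoint
  simp only [GadgetData.parts, List.pairwise_cons, List.mem_cons, List.mem_singleton,
    List.not_mem_nil, forall_eq_or_imp, forall_eq] at hpd
  obtain ⟨⟨d01,d02,d03,d04,d05,d06,d07,d08,d09,-⟩,⟨d12,d13,d14,d15,d16,d17,d18,d19,-⟩,⟨d23,d24,d25,d26,d27,d28,d29,-⟩,⟨d34,d35,d36,d37,d38,d39,-⟩,⟨d45,d46,d47,d48,d49,-⟩,⟨d56,d57,d58,d59,-⟩,⟨d67,d68,d69,-⟩,⟨d78,d79,-⟩,⟨d89,-⟩,-,-⟩ := hpd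
  exact ⟨d01,d02,d03,d04,d05,d06,d07,d08,d09,d12,d13,d14,d15,d16,d17,d18,d19,d23,d24,d25,d26,d27,d28,d29,d34,d35,d36,d37,d38,d39,d45,d46,d47,d48,d49,d56,d57,d58,d59,d67,d68,d69,d78,d79,d89⟩

end Aux2
section Aux3
open Finset
variable {V : Type*} [Fintype V] [DecidableEq V] {G : SimpleGraph V} [DecidableRel G.Adj]
  {wt : Sym2 V → ℕ}

lemma memX (g : Gadget V G wt) {e : Sym2 V} {v : V} (he : e ∈ G.edgeFinset) (hv : v ∈ e) :
    g.x e v ∈ g.Xset := by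
  letI := g.fintypeVH; letI := g.decEqVH
  exact Finset.mem_biUnion.mpr ⟨e, he,
    Finset.mem_image_of_mem _ (Finset.mem_filter.mpr ⟨Finset.mem_univ _, hv⟩)⟩

lemma memQ (g : Gadget V G wt) {e : Sym2 V} (he : e ∈ G.edgeFinset) (h : Fin 2) :
    g.q e h ∈ g.Qset := by
  letI := g.decEqVH
  refine Finset.mem_biUnion.mpr ⟨e, he, ?_⟩
  fin_cases h <;> simp

lemma adj_x_imp (g : Gadget V G wt) {e : Sym2 V} (he : e ∈ G.edgeFinset) {u : V} (hu : u ∈ e)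
    {b : g.VH} (hadj : g.H.Adj (g.x e u) b) :
    b ∈ g.Y e ∨ b ∈ g.Z e ∨ b ∈ g.L e u ∨ b = g.q e 0 ∨ b = g.q e 1 := by
  letI := g.fintypeVH; letI := g.decEqVH
  obtain ⟨d01,d02,d03,d04,d05,d06,d07,d08,d09,d12,d13,d14,d15,d16,d17,d18,d19,d23,d24,d25,d26,d27,d28,d29,d34,d35,d36,d37,d38,d39,d45,d46,d47,d48,d49,d56,d57,d58,d59,d67,d68,d69,d78,d79,d89⟩ := gdisj g
  have K : ∀ {a : g.VH} {s t : Finset g.VH}, Disjoint s t → a ∈ s → a ∈ t → False :=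
    fun hd h1 h2 => Finset.disjoint_left.mp hd h1 h2
  have hx6 : g.x e u ∈ g.Xset := memX g he hu
  rw [g.adj_iff] at hadj
  unfold GadgetData.AdjSpec at hadj
  rcases hadj with (⟨h1,h2⟩|⟨s,hs,h1,h2⟩|⟨v,h1,h2⟩|⟨e',he',v',hv',h1,h2⟩|⟨e',he',v',hv',h1,h2⟩|⟨e',he',h1,h2⟩|⟨e',he',hh,h1,h2⟩) | (⟨h1,h2⟩|⟨s,hs,h1,h2⟩|⟨v,h1,h2⟩|⟨e',he',v',hv',h1,h2⟩|⟨e',he',v',hv',h1,h2⟩|⟨e',he',h1,h2⟩|⟨e',he',hh,h1,h2⟩)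
  · exact absurd (h1 ▸ hx6) fun hm => K d06 (Finset.mem_singleton_self _) hm
  · exact absurd (h1.symm ▸ hs) fun hm => K d26 hm hx6
  · exact absurd (h1.symm ▸ Finset.mem_image_of_mem g.orig (Finset.mem_univ v))
      fun hm => K d46 hm hx6
  · exact absurd (h1.symm ▸ Finset.mem_image_of_mem g.orig (Finset.mem_univ v'))
      fun hm => K d46 hm hx6
  · obtain ⟨rfl, rfl⟩ := Prod.mk.injEq .. ▸ (g.x_inj e he u hu e' he' v' hv' h1)
    rcases h2 with h2 | h2 | h2
    · exact Or.inl h2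
    · exact Or.inr (Or.inl h2)
    · exact Or.inr (Or.inr (Or.inl h2))
  · exact absurd (h1.symm ▸ memQ g he' 0) fun hm => K d69 hx6 hm
  · exact absurd (h1.symm ▸ memQ g he' hh) fun hm => K d69 hx6 hm
  · exact absurd h2 fun hm => K d16 hm hx6
  · exact absurd (Finset.mem_biUnion.mpr ⟨s, hs, h2⟩) fun hm => K d36 hm hx6
  · exact absurd (Finset.mem_biUnion.mpr ⟨v, Finset.mem_univ v, h2⟩) fun hm => K d56 hm hx6
  · rcases h2 with h2 | h2
    · exact absurd (g.L_subset e' he' v' hv' h2) fun hm => K d16 hm hx6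
    · exact absurd (Finset.mem_biUnion.mpr ⟨e', he', h2⟩) fun hm => K d67 hx6 hm
  · rcases h2 with h2 | h2 | h2
    · exact absurd (Finset.mem_biUnion.mpr ⟨e', he', h2⟩) fun hm => K d67 hx6 hm
    · exact absurd (Finset.mem_biUnion.mpr ⟨e', he', h2⟩) fun hm => K d68 hx6 hm
    · exact absurd (g.L_subset e' he' v' hv' h2) fun hm => K d16 hm hx6
  · exact absurd (h2.symm ▸ memQ g he' 1) fun hm => K d69 hx6 hm
  · rcases h2 with h2 | ⟨v'', hv'', h2⟩ | ⟨v'', hv'', h2⟩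
    · exact absurd (Finset.mem_biUnion.mpr ⟨e', he', h2⟩) fun hm => K d68 hx6 hm
    · exact absurd (g.L_subset e' he' v'' hv'' h2) fun hm => K d16 hm hx6
    · obtain ⟨rfl, rfl⟩ := Prod.mk.injEq .. ▸ (g.x_inj e he u hu e' he' v'' hv'' h2)
      subst h1
      fin_cases hh
      · exact Or.inr (Or.inr (Or.inr (Or.inl rfl)))
      · exact Or.inr (Or.inr (Or.inr (Or.inr rfl)))

end Aux3
section Aux4
open Finset
variable {V : Type*} [Fintype V] [DecidableEq V] {G : SimpleGraph V} [DecidableRel G.Adj]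
  {wt : Sym2 V → ℕ}

lemma adj_x_of_mem (g : Gadget V G wt) {e : Sym2 V} (he : e ∈ G.edgeFinset) {v : V}
    (hv : v ∈ e) {b : g.VH} (hb : b ∈ g.Y e ∨ b ∈ g.Z e ∨ b ∈ g.L e v) :
    g.H.Adj (g.x e v) b := by
  rw [g.adj_iff]
  exact Or.inl (Or.inr (Or.inr (Or.inr (Or.inr (Or.inl ⟨e, he, v, hv, rfl, hb⟩)))))

lemma adj_q_iff (g : Gadget V G wt) {e : Sym2 V} (he : e ∈ G.edgeFinset) {u v : V}
    (huv : e = s(u, v)) (h : Fin 2) (b : g.VH) :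
    g.H.Adj (g.q e h) b ↔ (b ∈ g.Z e ∨ b ∈ g.L e u ∨ b ∈ g.L e v ∨
      b = g.x e u ∨ b = g.x e v ∨ b = g.q e (1 - h)) := by
  letI := g.fintypeVH; letI := g.decEqVH
  obtain ⟨d01,d02,d03,d04,d05,d06,d07,d08,d09,d12,d13,d14,d15,d16,d17,d18,d19,d23,d24,d25,d26,d27,d28,d29,d34,d35,d36,d37,d38,d39,d45,d46,d47,d48,d49,d56,d57,d58,d59,d67,d68,d69,d78,d79,d89⟩ := gdisj g
  have K : ∀ {a : g.VH} {s t : Finset g.VH}, Disjoint s t → a ∈ s → a ∈ t → False :=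
    fun hd h1 h2 => Finset.disjoint_left.mp hd h1 h2
  have hq9 : g.q e h ∈ g.Qset := memQ g he h
  have hu : u ∈ e := huv ▸ Sym2.mem_mk_left u v
  have hv : v ∈ e := huv ▸ Sym2.mem_mk_right u v
  constructor
  · intro hadj
    rw [g.adj_iff] at hadj
    unfold GadgetData.AdjSpec at hadj
    rcases hadj with (⟨h1,h2⟩|⟨s,hs,h1,h2⟩|⟨v0,h1,h2⟩|⟨e',he',v',hv',h1,h2⟩|⟨e',he',v',hv',h1,h2⟩|⟨e',he',h1,h2⟩|⟨e',he',hh,h1,h2⟩) | (⟨h1,h2⟩|⟨s,hs,h1,h2⟩|⟨v0,h1,h2⟩|⟨e',he',v',hv',h1,h2⟩|⟨e',he',v',hv',h1,h2⟩|⟨e',he',h1,h2⟩|⟨e',he',hh,h1,h2⟩)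
    · exact absurd (h1 ▸ hq9) fun hm => K d09 (Finset.mem_singleton_self _) hm
    · exact absurd (h1.symm ▸ hs) fun hm => K d29 hm hq9
    · exact absurd (h1.symm ▸ Finset.mem_image_of_mem g.orig (Finset.mem_univ v0))
        fun hm => K d49 hm hq9
    · exact absurd (h1.symm ▸ Finset.mem_image_of_mem g.orig (Finset.mem_univ v'))
        fun hm => K d49 hm hq9
    · exact absurd (h1.symm ▸ memX g he' hv') fun hm => K d69 hm hq9
    · obtain ⟨rfl, rfl⟩ := Prod.mk.injEq .. ▸ (g.q_inj e he h e' he' 0 h1)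
      exact Or.inr (Or.inr (Or.inr (Or.inr (Or.inr h2))))
    · obtain ⟨rfl, rfl⟩ := Prod.mk.injEq .. ▸ (g.q_inj e he h e' he' hh h1)
      rcases h2 with h2 | ⟨v0, hv0, h2⟩ | ⟨v0, hv0, h2⟩
      · exact Or.inl h2
      · rw [huv, Sym2.mem_iff] at hv0
        rcases hv0 with rfl | rfl
        · exact Or.inr (Or.inl h2)
        · exact Or.inr (Or.inr (Or.inl h2))
      · rw [huv, Sym2.mem_iff] at hv0
        rcases hv0 with rfl | rfl
        · exact Or.inr (Or.inr (Or.inr (Or.inl h2)))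
        · exact Or.inr (Or.inr (Or.inr (Or.inr (Or.inl h2))))
    · exact absurd h2 fun hm => K d19 hm hq9
    · exact absurd (Finset.mem_biUnion.mpr ⟨s, hs, h2⟩) fun hm => K d39 hm hq9
    · exact absurd (Finset.mem_biUnion.mpr ⟨v0, Finset.mem_univ v0, h2⟩) fun hm => K d59 hm hq9
    · rcases h2 with h2 | h2
      · exact absurd (g.L_subset e' he' v' hv' h2) fun hm => K d19 hm hq9
      · exact absurd (Finset.mem_biUnion.mpr ⟨e', he', h2⟩) fun hm => K d79 hm hq9
    · rcases h2 with h2 | h2 | h2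
      · exact absurd (Finset.mem_biUnion.mpr ⟨e', he', h2⟩) fun hm => K d79 hm hq9
      · exact absurd (Finset.mem_biUnion.mpr ⟨e', he', h2⟩) fun hm => K d89 hm hq9
      · exact absurd (g.L_subset e' he' v' hv' h2) fun hm => K d19 hm hq9
    · obtain ⟨rfl, rfl⟩ := Prod.mk.injEq .. ▸ (g.q_inj e he h e' he' 1 h2)
      exact Or.inr (Or.inr (Or.inr (Or.inr (Or.inr h1))))
    · rcases h2 with h2 | ⟨v0, hv0, h2⟩ | ⟨v0, hv0, h2⟩
      · exact absurd (Finset.mem_biUnion.mpr ⟨e', he', h2⟩) fun hm => K d89 hm hq9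
      · exact absurd (g.L_subset e' he' v0 hv0 h2) fun hm => K d19 hm hq9
      · exact absurd (h2.symm ▸ memX g he' hv0) fun hm => K d69 hm hq9
  · intro hb
    rw [g.adj_iff]
    unfold GadgetData.AdjSpec
    rcases hb with h2 | h2 | h2 | h2 | h2 | h2
    · exact Or.inl (Or.inr (Or.inr (Or.inr (Or.inr (Or.inr (Or.inr
        ⟨e, he, h, rfl, Or.inl h2⟩))))))
    · exact Or.inl (Or.inr (Or.inr (Or.inr (Or.inr (Or.inr (Or.inr
        ⟨e, he, h, rfl, Or.inr (Or.inl ⟨u, hu, h2⟩)⟩))))))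
    · exact Or.inl (Or.inr (Or.inr (Or.inr (Or.inr (Or.inr (Or.inr
        ⟨e, he, h, rfl, Or.inr (Or.inl ⟨v, hv, h2⟩)⟩))))))
    · exact Or.inl (Or.inr (Or.inr (Or.inr (Or.inr (Or.inr (Or.inr
        ⟨e, he, h, rfl, Or.inr (Or.inr ⟨u, hu, h2⟩)⟩))))))
    · exact Or.inl (Or.inr (Or.inr (Or.inr (Or.inr (Or.inr (Or.inr
        ⟨e, he, h, rfl, Or.inr (Or.inr ⟨v, hv, h2⟩)⟩))))))
    · subst h2
      fin_cases h
      · exact Or.inl (Or.inr (Or.inr (Or.inr (Or.inr (Or.inr (Or.inl ⟨e, he, rfl, rfl⟩))))))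
      · exact Or.inr (Or.inr (Or.inr (Or.inr (Or.inr (Or.inr (Or.inl ⟨e, he, rfl, rfl⟩))))))

end Aux4
section Aux5
open Finset
variable {V : Type*} [Fintype V] [DecidableEq V] {G : SimpleGraph V} [DecidableRel G.Adj]
  {wt : Sym2 V → ℕ}

lemma collision_q (g : Gadget V G wt) {e : Sym2 V} (he : e ∈ G.edgeFinset) {u v : V}
    (huv : e = s(u, v)) {c : g.VH → Fin (numColors G wt)}
    (hprop : ∀ ⦃a b : g.VH⦄, g.H.Adj a b → c a ≠ c b) (h : Fin 2)
    (hq : IsBVertex g.H c (g.q e h))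
    {a1 b1 a2 b2 : g.VH}
    (ha1 : g.H.Adj (g.q e h) a1) (hb1 : g.H.Adj (g.q e h) b1) (h1 : a1 ≠ b1)
    (hc1 : c a1 = c b1)
    (ha2 : g.H.Adj (g.q e h) a2) (hb2 : g.H.Adj (g.q e h) b2) (h2 : a2 ≠ b2)
    (hc2 : c a2 = c b2)
    (hne : c a1 ≠ c a2) : False := by
  letI := g.fintypeVH; letI := g.decEqVH
  obtain ⟨d01,d02,d03,d04,d05,d06,d07,d08,d09,d12,d13,d14,d15,d16,d17,d18,d19,d23,d24,d25,d26,d27,d28,d29,d34,d35,d36,d37,d38,d39,d45,d46,d47,d48,d49,d56,d57,d58,d59,d67,d68,d69,d78,d79,d89⟩ := gdisj g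
  have K : ∀ {a : g.VH} {s t : Finset g.VH}, Disjoint s t → a ∈ s → a ∈ t → False :=
    fun hd h1 h2 => Finset.disjoint_left.mp hd h1 h2
  have hu : u ∈ e := huv ▸ Sym2.mem_mk_left u v
  have hv : v ∈ e := huv ▸ Sym2.mem_mk_right u v
  have huvne : u ≠ v := by
    have := SimpleGraph.mem_edgeFinset.mp he
    rw [huv, SimpleGraph.mem_edgeSet] at this
    exact this.ne
  -- subset inclusions into parts
  have hZ8 : ∀ {a : g.VH}, a ∈ g.Z e → a ∈ G.edgeFinset.biUnion g.Z :=
    fun ha => Finset.mem_biUnion.mpr ⟨e, he, ha⟩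
  have hLu1 : ∀ {a : g.VH}, a ∈ g.L e u → a ∈ g.Sleaves := fun ha => g.L_subset e he u hu ha
  have hLv1 : ∀ {a : g.VH}, a ∈ g.L e v → a ∈ g.Sleaves := fun ha => g.L_subset e he v hv ha
  set T3 : Finset g.VH := {g.x e u, g.x e v, g.q e (1 - h)} with hT3def
  set s : Finset g.VH := ((g.Z e ∪ g.L e u) ∪ g.L e v) ∪ T3 with hsdef
  have hxx : g.x e u ≠ g.x e v := by
    intro hxy
    have := Prod.mk.injEq .. ▸ (g.x_inj e he u hu e he v hv hxy)
    exact huvne this.2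
  have hxq1 : g.x e u ≠ g.q e (1 - h) := fun hh => K d69 (memX g he hu) (hh ▸ memQ g he _)
  have hxq2 : g.x e v ≠ g.q e (1 - h) := fun hh => K d69 (memX g he hv) (hh ▸ memQ g he _)
  have hT3card : T3.card = 3 := by
    rw [hT3def, Finset.card_insert_of_notMem (by simp [hxx, hxq1]),
      Finset.card_insert_of_notMem (by simp [hxq2]), Finset.card_singleton]
  have dZLu : Disjoint (g.Z e) (g.L e u) :=
    Finset.disjoint_left.mpr fun {_} ha hb => K d18 (hLu1 hb) (hZ8 ha)
  have dZLuLv : Disjoint (g.Z e ∪ g.L e u) (g.L e v) := by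
    rw [Finset.disjoint_union_left]
    refine ⟨Finset.disjoint_left.mpr fun {_} ha hb => K d18 (hLv1 hb) (hZ8 ha), ?_⟩
    exact g.L_disjoint e he u hu e he v hv (by simp [huvne])
  have dT3 : Disjoint ((g.Z e ∪ g.L e u) ∪ g.L e v) T3 := by
    rw [Finset.disjoint_right]
    intro a haT3 haU
    rw [hT3def] at haT3
    simp only [Finset.mem_insert, Finset.mem_singleton] at haT3
    simp only [Finset.mem_union] at haU
    rcases haT3 with rfl | rfl | rfl
    · rcases haU with (haU | haU) | haU
      · exact K d68 (memX g he hu) (hZ8 haU)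
      · exact K d16 (hLu1 haU) (memX g he hu)
      · exact K d16 (hLv1 haU) (memX g he hu)
    · rcases haU with (haU | haU) | haU
      · exact K d68 (memX g he hv) (hZ8 haU)
      · exact K d16 (hLu1 haU) (memX g he hv)
      · exact K d16 (hLv1 haU) (memX g he hv)
    · rcases haU with (haU | haU) | haU
      · exact K d89 (hZ8 haU) (memQ g he _)
      · exact K d19 (hLu1 haU) (memQ g he _)
      · exact K d19 (hLv1 haU) (memQ g he _)
  have hscard : s.card = numColors G wt := by
    rw [hsdef, Finset.card_union_of_disjoint dT3, Finset.card_union_of_disjoint dZLuLv,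
      Finset.card_union_of_disjoint dZLu, hT3card, g.card_L e he u hu, g.card_L e he v hv]
    have := g.card_Z e he
    omega
  have hmem : ∀ b : g.VH, g.H.Adj (g.q e h) b ↔ b ∈ s := by
    intro b
    rw [adj_q_iff g he huv h b, hsdef, hT3def]
    simp only [Finset.mem_union, Finset.mem_insert, Finset.mem_singleton]
    tauto
  exact two_collisions c s (g.q e h) hscard
    (fun a ha => (hprop ((hmem a).mpr ha)).symm)
    (fun col hcol => by
      obtain ⟨b, hb, hcb⟩ := hq col hcol
      exact ⟨b, (hmem b).mp hb, hcb⟩)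
    ((hmem a1).mp ha1) ((hmem b1).mp hb1) h1 hc1
    ((hmem a2).mp ha2) ((hmem b2).mp hb2) h2 hc2 hne

end Aux5
section Aux6
open Finset
variable {V : Type*} [Fintype V] [DecidableEq V] {G : SimpleGraph V} [DecidableRel G.Adj]
  {wt : Sym2 V → ℕ}

lemma both_x_not (g : Gadget V G wt) {e : Sym2 V} (he : e ∈ G.edgeFinset) {u v : V}
    (huv : e = s(u, v)) {c : g.VH → Fin (numColors G wt)}
    (hprop : ∀ ⦃a b : g.VH⦄, g.H.Adj a b → c a ≠ c b)
    (hxu : IsBVertex g.H c (g.x e u)) (hxv : IsBVertex g.H c (g.x e v))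
    (hab : c (g.x e u) ≠ c (g.x e v)) (h : Fin 2) (hq : IsBVertex g.H c (g.q e h)) :
    False := by
  letI := g.fintypeVH; letI := g.decEqVH
  obtain ⟨d01,d02,d03,d04,d05,d06,d07,d08,d09,d12,d13,d14,d15,d16,d17,d18,d19,d23,d24,d25,d26,d27,d28,d29,d34,d35,d36,d37,d38,d39,d45,d46,d47,d48,d49,d56,d57,d58,d59,d67,d68,d69,d78,d79,d89⟩ := gdisj g
  have K : ∀ {a : g.VH} {s t : Finset g.VH}, Disjoint s t → a ∈ s → a ∈ t → False :=
    fun hd h1 h2 => Finset.disjoint_left.mp hd h1 h2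
  have hu : u ∈ e := huv ▸ Sym2.mem_mk_left u v
  have hv : v ∈ e := huv ▸ Sym2.mem_mk_right u v
  have hadjq : ∀ (h' : Fin 2) (b : g.VH),
      (b ∈ g.Z e ∨ b ∈ g.L e u ∨ b ∈ g.L e v ∨ b = g.x e u ∨ b = g.x e v ∨
        b = g.q e (1 - h')) → g.H.Adj (g.q e h') b :=
    fun h' b hb => (adj_q_iff g he huv h' b).mpr hb
  -- witness of color c (x e v) in L e u
  obtain ⟨b1, hb1adj, hb1c⟩ := hxu (c (g.x e v)) (Ne.symm hab)
  have hb1L : b1 ∈ g.L e u := by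
    rcases adj_x_imp g he hu hb1adj with hY | hZ | hL | rfl | rfl
    · exact absurd hb1c.symm (hprop (adj_x_of_mem g he hv (Or.inl hY)))
    · exact absurd hb1c.symm (hprop (adj_x_of_mem g he hv (Or.inr (Or.inl hZ))))
    · exact hL
    · exact absurd hb1c (hprop (hadjq 0 _ (Or.inr (Or.inr (Or.inr (Or.inr (Or.inl rfl)))))))
    · exact absurd hb1c (hprop (hadjq 1 _ (Or.inr (Or.inr (Or.inr (Or.inr (Or.inl rfl)))))))
  -- witness of color c (x e u) in L e v
  obtain ⟨b2, hb2adj, hb2c⟩ := hxv (c (g.x e u)) hab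
  have hb2L : b2 ∈ g.L e v := by
    rcases adj_x_imp g he hv hb2adj with hY | hZ | hL | rfl | rfl
    · exact absurd hb2c.symm (hprop (adj_x_of_mem g he hu (Or.inl hY)))
    · exact absurd hb2c.symm (hprop (adj_x_of_mem g he hu (Or.inr (Or.inl hZ))))
    · exact hL
    · exact absurd hb2c (hprop (hadjq 0 _ (Or.inr (Or.inr (Or.inr (Or.inl rfl))))))
    · exact absurd hb2c (hprop (hadjq 1 _ (Or.inr (Or.inr (Or.inr (Or.inl rfl))))))
  have hb1ne : b1 ≠ g.x e v := fun hh =>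
    K d16 (g.L_subset e he u hu hb1L) (hh ▸ memX g he hv)
  have hb2ne : b2 ≠ g.x e u := fun hh =>
    K d16 (g.L_subset e he v hv hb2L) (hh ▸ memX g he hu)
  exact collision_q g he huv hprop h hq
    (hadjq h b1 (Or.inr (Or.inl hb1L)))
    (hadjq h _ (Or.inr (Or.inr (Or.inr (Or.inr (Or.inl rfl)))))) hb1ne
    (by rw [hb1c])
    (hadjq h b2 (Or.inr (Or.inr (Or.inl hb2L))))
    (hadjq h _ (Or.inr (Or.inr (Or.inr (Or.inl rfl))))) hb2ne
    (by rw [hb2c])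
    (by rw [hb1c, hb2c]; exact Ne.symm hab)

lemma x_forces (g : Gadget V G wt) {e : Sym2 V} (he : e ∈ G.edgeFinset) {u v : V}
    (huv : e = s(u, v)) {c : g.VH → Fin (numColors G wt)}
    (hprop : ∀ ⦃a b : g.VH⦄, g.H.Adj a b → c a ≠ c b)
    (hx : IsBVertex g.H c (g.x e u)) (hq : IsBVertex g.H c (g.q e 0)) :
    ∀ ℓ ∈ g.L e v, ∃ y ∈ g.Y e, c y = c ℓ := by
  letI := g.fintypeVH; letI := g.decEqVH
  obtain ⟨d01,d02,d03,d04,d05,d06,d07,d08,d09,d12,d13,d14,d15,d16,d17,d18,d19,d23,d24,d25,d26,d27,d28,d29,d34,d35,d36,d37,d38,d39,d45,d46,d47,d48,d49,d56,d57,d58,d59,d67,d68,d69,d78,d79,d89⟩ := gdisj g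
  have K : ∀ {a : g.VH} {s t : Finset g.VH}, Disjoint s t → a ∈ s → a ∈ t → False :=
    fun hd h1 h2 => Finset.disjoint_left.mp hd h1 h2
  have hu : u ∈ e := huv ▸ Sym2.mem_mk_left u v
  have hv : v ∈ e := huv ▸ Sym2.mem_mk_right u v
  have huvne : u ≠ v := by
    have := SimpleGraph.mem_edgeFinset.mp he
    rw [huv, SimpleGraph.mem_edgeSet] at this
    exact this.ne
  have hadjq : ∀ (h' : Fin 2) (b : g.VH),
      (b ∈ g.Z e ∨ b ∈ g.L e u ∨ b ∈ g.L e v ∨ b = g.x e u ∨ b = g.x e v ∨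
        b = g.q e (1 - h')) → g.H.Adj (g.q e h') b :=
    fun h' b hb => (adj_q_iff g he huv h' b).mpr hb
  have hxx : g.x e u ≠ g.x e v := by
    intro hxy
    have := Prod.mk.injEq .. ▸ (g.x_inj e he u hu e he v hv hxy)
    exact huvne this.2
  intro ℓ hℓ
  have hℓS : ℓ ∈ g.Sleaves := g.L_subset e he v hv hℓ
  have hℓxv : ℓ ≠ g.x e v := fun hh => K d16 hℓS (hh ▸ memX g he hv)
  have hℓxu : ℓ ≠ g.x e u := fun hh => K d16 hℓS (hh ▸ memX g he hu)
  have hadjxvℓ : g.H.Adj (g.x e v) ℓ := adj_x_of_mem g he hv (Or.inr (Or.inr hℓ))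
  have hcolβ : c (g.x e v) ≠ c ℓ := hprop hadjxvℓ
  have hcolq : ∀ h' : Fin 2, c ℓ ≠ c (g.q e h') :=
    fun h' => (hprop (hadjq h' ℓ (Or.inr (Or.inr (Or.inl hℓ))))).symm
  -- pair 1 : p ~ q, p ≠ x e v, with color c (x e v)
  obtain ⟨p, hpq, hpne, hpc⟩ : ∃ p, g.H.Adj (g.q e 0) p ∧ p ≠ g.x e v ∧ c p = c (g.x e v) := by
    rcases eq_or_ne (c (g.x e u)) (c (g.x e v)) with hab | hab
    · exact ⟨g.x e u, hadjq 0 _ (Or.inr (Or.inr (Or.inr (Or.inl rfl)))), hxx, hab⟩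
    · obtain ⟨b1, hb1adj, hb1c⟩ := hx (c (g.x e v)) (Ne.symm hab)
      have hb1L : b1 ∈ g.L e u := by
        rcases adj_x_imp g he hu hb1adj with hY | hZ | hL | rfl | rfl
        · exact absurd hb1c.symm (hprop (adj_x_of_mem g he hv (Or.inl hY)))
        · exact absurd hb1c.symm (hprop (adj_x_of_mem g he hv (Or.inr (Or.inl hZ))))
        · exact hL
        · exact absurd hb1c (hprop (hadjq 0 _ (Or.inr (Or.inr (Or.inr (Or.inr (Or.inl rfl)))))))
        · exact absurd hb1c (hprop (hadjq 1 _ (Or.inr (Or.inr (Or.inr (Or.inr (Or.inl rfl)))))))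
      exact ⟨b1, hadjq 0 b1 (Or.inr (Or.inl hb1L)),
        fun hh => K d16 (g.L_subset e he u hu hb1L) (hh ▸ memX g he hv), hb1c⟩
  have hℓp : c ℓ ≠ c p := fun hh => hcolβ (hpc.symm.trans hh.symm)
  -- c ℓ ≠ c (x e u)
  have hcolα : c ℓ ≠ c (g.x e u) := by
    intro hh
    exact collision_q g he huv hprop 0 hq
      (hadjq 0 _ (Or.inr (Or.inr (Or.inr (Or.inl rfl)))))
      (hadjq 0 ℓ (Or.inr (Or.inr (Or.inl hℓ)))) (Ne.symm hℓxu) hh.symm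
      hpq (hadjq 0 _ (Or.inr (Or.inr (Or.inr (Or.inr (Or.inl rfl)))))) hpne hpc
      (by rw [← hh]; exact hℓp)
  obtain ⟨b0, hb0adj, hb0c⟩ := hx (c ℓ) hcolα
  rcases adj_x_imp g he hu hb0adj with hY | hZ | hL | rfl | rfl
  · exact ⟨b0, hY, hb0c⟩
  · have hb0ℓ : b0 ≠ ℓ := fun hh =>
      K d18 hℓS (hh ▸ Finset.mem_biUnion.mpr ⟨e, he, hZ⟩)
    exact (collision_q g he huv hprop 0 hq
      (hadjq 0 b0 (Or.inl hZ)) (hadjq 0 ℓ (Or.inr (Or.inr (Or.inl hℓ)))) hb0ℓ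
      hb0c
      hpq (hadjq 0 _ (Or.inr (Or.inr (Or.inr (Or.inr (Or.inl rfl)))))) hpne hpc
      (by rw [hb0c, hpc]; exact fun h2 => hcolβ h2.symm)).elim
  · have hb0ℓ : b0 ≠ ℓ := fun hh => by
      have hd := g.L_disjoint e he u hu e he v hv (by simp [huvne])
      exact K hd hL (hh ▸ hℓ)
    exact (collision_q g he huv hprop 0 hq
      (hadjq 0 b0 (Or.inr (Or.inl hL))) (hadjq 0 ℓ (Or.inr (Or.inr (Or.inl hℓ)))) hb0ℓ
      hb0c
      hpq (hadjq 0 _ (Or.inr (Or.inr (Or.inr (Or.inr (Or.inl rfl)))))) hpne hpc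
      (by rw [hb0c, hpc]; exact fun h2 => hcolβ h2.symm)).elim
  · exact absurd hb0c (hcolq 0).symm
  · exact absurd hb0c (hcolq 1).symm

end Aux6
section Aux7
open Finset
variable {V : Type*} [Fintype V] [DecidableEq V] {G : SimpleGraph V} [DecidableRel G.Adj]
  {wt : Sym2 V → ℕ}

lemma filter_mem_sym2_card (e : Sym2 V) :
    ((Finset.univ : Finset V).filter (· ∈ e)).card ≤ 2 := by
  induction e using Sym2.inductionOn with
  | hf u v =>
    have hsub : (Finset.univ : Finset V).filter (· ∈ s(u,v)) ⊆ {u, v} := by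
      intro a ha
      simp only [Finset.mem_filter, Sym2.mem_iff] at ha
      simp [ha.2]
    exact (Finset.card_le_card hsub).trans ((Finset.card_insert_le _ _).trans (by simp))

lemma not_b_Sleaf (g : Gadget V G wt) {c : g.VH → Fin (numColors G wt)}
    (hk9 : 9 ≤ numColors G wt) {a : g.VH} (ha : a ∈ g.Sleaves)
    (hb : IsBVertex g.H c a) : False := by
  letI := g.fintypeVH; letI := g.decEqVH
  obtain ⟨d01,d02,d03,d04,d05,d06,d07,d08,d09,d12,d13,d14,d15,d16,d17,d18,d19,d23,d24,d25,d26,d27,d28,d29,d34,d35,d36,d37,d38,d39,d45,d46,d47,d48,d49,d56,d57,d58,d59,d67,d68,d69,d78,d79,d89⟩ := gdisj g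
  have K : ∀ {a : g.VH} {s t : Finset g.VH}, Disjoint s t → a ∈ s → a ∈ t → False :=
    fun hd h1 h2 => Finset.disjoint_left.mp hd h1 h2
  have hN : ∀ b, g.H.Adj a b → b = g.sstar ∨ ∃ e1 ∈ G.edgeFinset, ∃ v1, v1 ∈ e1 ∧
      a ∈ g.L e1 v1 ∧ (b = g.orig v1 ∨ b = g.x e1 v1 ∨ b = g.q e1 0 ∨ b = g.q e1 1) := by
    intro b hadj
    rw [g.adj_iff] at hadj
    unfold GadgetData.AdjSpec at hadj
    rcases hadj with (⟨h1,h2⟩|⟨s,hs,h1,h2⟩|⟨v0,h1,h2⟩|⟨e',he',v',hv',h1,h2⟩|⟨e',he',v',hv',h1,h2⟩|⟨e',he',h1,h2⟩|⟨e',he',hh,h1,h2⟩) | (⟨h1,h2⟩|⟨s,hs,h1,h2⟩|⟨v0,h1,h2⟩|⟨e',he',v',hv',h1,h2⟩|⟨e',he',v',hv',h1,h2⟩|⟨e',he',h1,h2⟩|⟨e',he',hh,h1,h2⟩)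
    · exact absurd (h1 ▸ ha) fun hm => K d01 (Finset.mem_singleton_self _) hm
    · exact absurd (h1.symm ▸ hs) fun hm => K d12 ha hm
    · exact absurd (h1.symm ▸ Finset.mem_image_of_mem g.orig (Finset.mem_univ v0))
        fun hm => K d14 ha hm
    · exact absurd (h1.symm ▸ Finset.mem_image_of_mem g.orig (Finset.mem_univ v'))
        fun hm => K d14 ha hm
    · exact absurd (h1.symm ▸ memX g he' hv') fun hm => K d16 ha hm
    · exact absurd (h1.symm ▸ memQ g he' 0) fun hm => K d19 ha hm
    · exact absurd (h1.symm ▸ memQ g he' hh) fun hm => K d19 ha hm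
    · exact Or.inl h1
    · exact absurd (Finset.mem_biUnion.mpr ⟨s, hs, h2⟩) fun hm => K d13 ha hm
    · exact absurd (Finset.mem_biUnion.mpr ⟨v0, Finset.mem_univ v0, h2⟩) fun hm => K d15 ha hm
    · rcases h2 with h2 | h2
      · exact Or.inr ⟨e', he', v', hv', h2, Or.inl h1⟩
      · exact absurd (Finset.mem_biUnion.mpr ⟨e', he', h2⟩) fun hm => K d17 ha hm
    · rcases h2 with h2 | h2 | h2
      · exact absurd (Finset.mem_biUnion.mpr ⟨e', he', h2⟩) fun hm => K d17 ha hm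
      · exact absurd (Finset.mem_biUnion.mpr ⟨e', he', h2⟩) fun hm => K d18 ha hm
      · exact Or.inr ⟨e', he', v', hv', h2, Or.inr (Or.inl h1)⟩
    · exact absurd (h2.symm ▸ memQ g he' 1) fun hm => K d19 ha hm
    · rcases h2 with h2 | ⟨v0, hv0, h2⟩ | ⟨v0, hv0, h2⟩
      · exact absurd (Finset.mem_biUnion.mpr ⟨e', he', h2⟩) fun hm => K d18 ha hm
      · refine Or.inr ⟨e', he', v0, hv0, h2, ?_⟩
        subst h1
        fin_cases hh
        · exact Or.inr (Or.inr (Or.inl rfl))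
        · exact Or.inr (Or.inr (Or.inr rfl))
      · exact absurd (h2.symm ▸ memX g he' hv0) fun hm => K d16 ha hm
  by_cases hL : ∃ e1 ∈ G.edgeFinset, ∃ v1, v1 ∈ e1 ∧ a ∈ g.L e1 v1
  · obtain ⟨e1, he1, v1, hv1, haL⟩ := hL
    have huniq : ∀ e2 ∈ G.edgeFinset, ∀ v2, v2 ∈ e2 → a ∈ g.L e2 v2 →
        e2 = e1 ∧ v2 = v1 := by
      intro e2 he2 v2 hv2 haL2
      by_contra hne
      have hpne : (e2, v2) ≠ (e1, v1) := by
        intro hp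
        exact hne ⟨congrArg Prod.fst hp, congrArg Prod.snd hp⟩
      exact K (g.L_disjoint e2 he2 v2 hv2 e1 he1 v1 hv1 hpne) haL2 haL
    have hsub : ∀ b, g.H.Adj a b →
        b ∈ ({g.sstar, g.orig v1, g.x e1 v1, g.q e1 0, g.q e1 1} : Finset g.VH) := by
      intro b hadj
      rcases hN b hadj with rfl | ⟨e2, he2, v2, hv2, haL2, hb2⟩
      · simp
      · obtain ⟨rfl, rfl⟩ := huniq e2 he2 v2 hv2 haL2
        simp only [Finset.mem_insert, Finset.mem_singleton]
        tauto
    have hcard := bcol_card_le hb hsub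
    have h5 : ({g.sstar, g.orig v1, g.x e1 v1, g.q e1 0, g.q e1 1} : Finset g.VH).card ≤ 5 := by
      refine (Finset.card_insert_le _ _).trans (Nat.succ_le_succ ?_)
      refine (Finset.card_insert_le _ _).trans (Nat.succ_le_succ ?_)
      refine (Finset.card_insert_le _ _).trans (Nat.succ_le_succ ?_)
      exact (Finset.card_insert_le _ _).trans (by simp)
    omega
  · have hsub : ∀ b, g.H.Adj a b → b ∈ ({g.sstar} : Finset g.VH) := by
      intro b hadj
      rcases hN b hadj with rfl | ⟨e2, he2, v2, hv2, haL2, hb2⟩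
      · simp
      · exact absurd ⟨e2, he2, v2, hv2, haL2⟩ hL
    have hcard := bcol_card_le hb hsub
    simp only [Finset.card_singleton] at hcard
    omega

lemma not_b_Aleaf (g : Gadget V G wt) {c : g.VH → Fin (numColors G wt)}
    (hk9 : 9 ≤ numColors G wt) {a : g.VH} {s0 : g.VH} (hs0 : s0 ∈ g.Acenters)
    (ha : a ∈ g.Aleaves s0) (hb : IsBVertex g.H c a) : False := by
  letI := g.fintypeVH; letI := g.decEqVH
  obtain ⟨d01,d02,d03,d04,d05,d06,d07,d08,d09,d12,d13,d14,d15,d16,d17,d18,d19,d23,d24,d25,d26,d27,d28,d29,d34,d35,d36,d37,d38,d39,d45,d46,d47,d48,d49,d56,d57,d58,d59,d67,d68,d69,d78,d79,d89⟩ := gdisj g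
  have K : ∀ {a : g.VH} {s t : Finset g.VH}, Disjoint s t → a ∈ s → a ∈ t → False :=
    fun hd h1 h2 => Finset.disjoint_left.mp hd h1 h2
  have ha3 : a ∈ g.Acenters.biUnion g.Aleaves := Finset.mem_biUnion.mpr ⟨s0, hs0, ha⟩
  have hsub : ∀ b, g.H.Adj a b → b ∈ ({s0} : Finset g.VH) := by
    intro b hadj
    rw [g.adj_iff] at hadj
    unfold GadgetData.AdjSpec at hadj
    rcases hadj with (⟨h1,h2⟩|⟨s,hs,h1,h2⟩|⟨v0,h1,h2⟩|⟨e',he',v',hv',h1,h2⟩|⟨e',he',v',hv',h1,h2⟩|⟨e',he',h1,h2⟩|⟨e',he',hh,h1,h2⟩) | (⟨h1,h2⟩|⟨s,hs,h1,h2⟩|⟨v0,h1,h2⟩|⟨e',he',v',hv',h1,h2⟩|⟨e',he',v',hv',h1,h2⟩|⟨e',he',h1,h2⟩|⟨e',he',hh,h1,h2⟩)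
    · exact absurd (h1 ▸ ha3) fun hm => K d03 (Finset.mem_singleton_self _) hm
    · exact absurd (h1.symm ▸ hs) fun hm => K d23 hm ha3
    · exact absurd (h1.symm ▸ Finset.mem_image_of_mem g.orig (Finset.mem_univ v0))
        fun hm => K d34 ha3 hm
    · exact absurd (h1.symm ▸ Finset.mem_image_of_mem g.orig (Finset.mem_univ v'))
        fun hm => K d34 ha3 hm
    · exact absurd (h1.symm ▸ memX g he' hv') fun hm => K d36 ha3 hm
    · exact absurd (h1.symm ▸ memQ g he' 0) fun hm => K d39 ha3 hm
    · exact absurd (h1.symm ▸ memQ g he' hh) fun hm => K d39 ha3 hm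
    · exact absurd h2 fun hm => K d13 hm ha3
    · obtain rfl : s = s0 := by
        by_contra hne
        exact K (g.Aleaves_disjoint s hs s0 hs0 hne) h2 ha
      simp [h1]
    · exact absurd (Finset.mem_biUnion.mpr ⟨v0, Finset.mem_univ v0, h2⟩)
        fun hm => K d35 ha3 hm
    · rcases h2 with h2 | h2
      · exact absurd (g.L_subset e' he' v' hv' h2) fun hm => K d13 hm ha3
      · exact absurd (Finset.mem_biUnion.mpr ⟨e', he', h2⟩) fun hm => K d37 ha3 hm
    · rcases h2 with h2 | h2 | h2
      · exact absurd (Finset.mem_biUnion.mpr ⟨e', he', h2⟩) fun hm => K d37 ha3 hm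
      · exact absurd (Finset.mem_biUnion.mpr ⟨e', he', h2⟩) fun hm => K d38 ha3 hm
      · exact absurd (g.L_subset e' he' v' hv' h2) fun hm => K d13 hm ha3
    · exact absurd (h2.symm ▸ memQ g he' 1) fun hm => K d39 ha3 hm
    · rcases h2 with h2 | ⟨v0, hv0, h2⟩ | ⟨v0, hv0, h2⟩
      · exact absurd (Finset.mem_biUnion.mpr ⟨e', he', h2⟩) fun hm => K d38 ha3 hm
      · exact absurd (g.L_subset e' he' v0 hv0 h2) fun hm => K d13 hm ha3
      · exact absurd (h2.symm ▸ memX g he' hv0) fun hm => K d36 ha3 hm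
  have hcard := bcol_card_le hb hsub
  simp only [Finset.card_singleton] at hcard
  omega

lemma not_b_P (g : Gadget V G wt) {c : g.VH → Fin (numColors G wt)}
    (hk9 : 9 ≤ numColors G wt) {a : g.VH} {v0 : V}
    (ha : a ∈ g.P v0) (hb : IsBVertex g.H c a) : False := by
  letI := g.fintypeVH; letI := g.decEqVH
  obtain ⟨d01,d02,d03,d04,d05,d06,d07,d08,d09,d12,d13,d14,d15,d16,d17,d18,d19,d23,d24,d25,d26,d27,d28,d29,d34,d35,d36,d37,d38,d39,d45,d46,d47,d48,d49,d56,d57,d58,d59,d67,d68,d69,d78,d79,d89⟩ := gdisj g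
  have K : ∀ {a : g.VH} {s t : Finset g.VH}, Disjoint s t → a ∈ s → a ∈ t → False :=
    fun hd h1 h2 => Finset.disjoint_left.mp hd h1 h2
  have ha5 : a ∈ Finset.univ.biUnion g.P := Finset.mem_biUnion.mpr ⟨v0, Finset.mem_univ v0, ha⟩
  have hsub : ∀ b, g.H.Adj a b → b ∈ ({g.orig v0} : Finset g.VH) := by
    intro b hadj
    rw [g.adj_iff] at hadj
    unfold GadgetData.AdjSpec at hadj
    rcases hadj with (⟨h1,h2⟩|⟨s,hs,h1,h2⟩|⟨v1,h1,h2⟩|⟨e',he',v',hv',h1,h2⟩|⟨e',he',v',hv',h1,h2⟩|⟨e',he',h1,h2⟩|⟨e',he',hh,h1,h2⟩) | (⟨h1,h2⟩|⟨s,hs,h1,h2⟩|⟨v1,h1,h2⟩|⟨e',he',v',hv',h1,h2⟩|⟨e',he',v',hv',h1,h2⟩|⟨e',he',h1,h2⟩|⟨e',he',hh,h1,h2⟩)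
    · exact absurd (h1 ▸ ha5) fun hm => K d05 (Finset.mem_singleton_self _) hm
    · exact absurd (h1.symm ▸ hs) fun hm => K d25 hm ha5
    · exact absurd (h1.symm ▸ Finset.mem_image_of_mem g.orig (Finset.mem_univ v1))
        fun hm => K d45 hm ha5
    · exact absurd (h1.symm ▸ Finset.mem_image_of_mem g.orig (Finset.mem_univ v'))
        fun hm => K d45 hm ha5
    · exact absurd (h1.symm ▸ memX g he' hv') fun hm => K d56 ha5 hm
    · exact absurd (h1.symm ▸ memQ g he' 0) fun hm => K d59 ha5 hm
    · exact absurd (h1.symm ▸ memQ g he' hh) fun hm => K d59 ha5 hm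
    · exact absurd h2 fun hm => K d15 hm ha5
    · exact absurd (Finset.mem_biUnion.mpr ⟨s, hs, h2⟩) fun hm => K d35 hm ha5
    · obtain rfl : v1 = v0 := by
        by_contra hne
        exact K (g.P_disjoint v1 v0 hne) h2 ha
      simp [h1]
    · rcases h2 with h2 | h2
      · exact absurd (g.L_subset e' he' v' hv' h2) fun hm => K d15 hm ha5
      · exact absurd (Finset.mem_biUnion.mpr ⟨e', he', h2⟩) fun hm => K d57 ha5 hm
    · rcases h2 with h2 | h2 | h2
      · exact absurd (Finset.mem_biUnion.mpr ⟨e', he', h2⟩) fun hm => K d57 ha5 hm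
      · exact absurd (Finset.mem_biUnion.mpr ⟨e', he', h2⟩) fun hm => K d58 ha5 hm
      · exact absurd (g.L_subset e' he' v' hv' h2) fun hm => K d15 hm ha5
    · exact absurd (h2.symm ▸ memQ g he' 1) fun hm => K d59 ha5 hm
    · rcases h2 with h2 | ⟨v1, hv1, h2⟩ | ⟨v1, hv1, h2⟩
      · exact absurd (Finset.mem_biUnion.mpr ⟨e', he', h2⟩) fun hm => K d58 ha5 hm
      · exact absurd (g.L_subset e' he' v1 hv1 h2) fun hm => K d15 hm ha5
      · exact absurd (h2.symm ▸ memX g he' hv1) fun hm => K d56 ha5 hm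
  have hcard := bcol_card_le hb hsub
  simp only [Finset.card_singleton] at hcard
  omega

lemma not_b_Y (g : Gadget V G wt) {c : g.VH → Fin (numColors G wt)}
    (hk9 : 9 ≤ numColors G wt) {a : g.VH} {e : Sym2 V} (he : e ∈ G.edgeFinset)
    (ha : a ∈ g.Y e) (hb : IsBVertex g.H c a) : False := by
  letI := g.fintypeVH; letI := g.decEqVH
  obtain ⟨d01,d02,d03,d04,d05,d06,d07,d08,d09,d12,d13,d14,d15,d16,d17,d18,d19,d23,d24,d25,d26,d27,d28,d29,d34,d35,d36,d37,d38,d39,d45,d46,d47,d48,d49,d56,d57,d58,d59,d67,d68,d69,d78,d79,d89⟩ := gdisj g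
  have K : ∀ {a : g.VH} {s t : Finset g.VH}, Disjoint s t → a ∈ s → a ∈ t → False :=
    fun hd h1 h2 => Finset.disjoint_left.mp hd h1 h2
  have ha7 : a ∈ G.edgeFinset.biUnion g.Y := Finset.mem_biUnion.mpr ⟨e, he, ha⟩
  have hYuniq : ∀ e' ∈ G.edgeFinset, a ∈ g.Y e' → e' = e := by
    intro e' he' ha'
    by_contra hne
    exact K (g.Y_disjoint e' he' e he hne) ha' ha
  set S : Finset g.VH :=
    (Finset.univ.filter (· ∈ e)).image g.orig ∪ (Finset.univ.filter (· ∈ e)).image (g.x e)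
    with hSdef
  have hsub : ∀ b, g.H.Adj a b → b ∈ S := by
    intro b hadj
    rw [g.adj_iff] at hadj
    unfold GadgetData.AdjSpec at hadj
    rcases hadj with (⟨h1,h2⟩|⟨s,hs,h1,h2⟩|⟨v1,h1,h2⟩|⟨e',he',v',hv',h1,h2⟩|⟨e',he',v',hv',h1,h2⟩|⟨e',he',h1,h2⟩|⟨e',he',hh,h1,h2⟩) | (⟨h1,h2⟩|⟨s,hs,h1,h2⟩|⟨v1,h1,h2⟩|⟨e',he',v',hv',h1,h2⟩|⟨e',he',v',hv',h1,h2⟩|⟨e',he',h1,h2⟩|⟨e',he',hh,h1,h2⟩)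
    · exact absurd (h1 ▸ ha7) fun hm => K d07 (Finset.mem_singleton_self _) hm
    · exact absurd (h1.symm ▸ hs) fun hm => K d27 hm ha7
    · exact absurd (h1.symm ▸ Finset.mem_image_of_mem g.orig (Finset.mem_univ v1))
        fun hm => K d47 hm ha7
    · exact absurd (h1.symm ▸ Finset.mem_image_of_mem g.orig (Finset.mem_univ v'))
        fun hm => K d47 hm ha7
    · exact absurd (h1.symm ▸ memX g he' hv') fun hm => K d67 hm ha7
    · exact absurd (h1.symm ▸ memQ g he' 0) fun hm => K d79 ha7 hm
    · exact absurd (h1.symm ▸ memQ g he' hh) fun hm => K d79 ha7 hm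
    · exact absurd h2 fun hm => K d17 hm ha7
    · exact absurd (Finset.mem_biUnion.mpr ⟨s, hs, h2⟩) fun hm => K d37 hm ha7
    · exact absurd (Finset.mem_biUnion.mpr ⟨v1, Finset.mem_univ v1, h2⟩)
        fun hm => K d57 hm ha7
    · rcases h2 with h2 | h2
      · exact absurd (g.L_subset e' he' v' hv' h2) fun hm => K d17 hm ha7
      · obtain rfl := hYuniq e' he' h2
        exact h1.symm ▸ Finset.mem_union_left _ (Finset.mem_image_of_mem _
          (Finset.mem_filter.mpr ⟨Finset.mem_univ _, hv'⟩))
    · rcases h2 with h2 | h2 | h2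
      · obtain rfl := hYuniq e' he' h2
        exact h1.symm ▸ Finset.mem_union_right _ (Finset.mem_image_of_mem _
          (Finset.mem_filter.mpr ⟨Finset.mem_univ _, hv'⟩))
      · exact absurd (Finset.mem_biUnion.mpr ⟨e', he', h2⟩) fun hm => K d78 ha7 hm
      · exact absurd (g.L_subset e' he' v' hv' h2) fun hm => K d17 hm ha7
    · exact absurd (h2.symm ▸ memQ g he' 1) fun hm => K d79 ha7 hm
    · rcases h2 with h2 | ⟨v1, hv1, h2⟩ | ⟨v1, hv1, h2⟩
      · exact absurd (Finset.mem_biUnion.mpr ⟨e', he', h2⟩) fun hm => K d78 ha7 hm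
      · exact absurd (g.L_subset e' he' v1 hv1 h2) fun hm => K d17 hm ha7
      · exact absurd (h2.symm ▸ memX g he' hv1) fun hm => K d67 hm ha7
  have hcard := bcol_card_le hb hsub
  have hS4 : S.card ≤ 4 := by
    refine (Finset.card_union_le _ _).trans ?_
    have h1 := (Finset.card_image_le (s := Finset.univ.filter (· ∈ e)) (f := g.orig)).trans
      (filter_mem_sym2_card e)
    have h2 := (Finset.card_image_le (s := Finset.univ.filter (· ∈ e)) (f := g.x e)).trans
      (filter_mem_sym2_card e)
    omega
  omega

lemma not_b_Z (g : Gadget V G wt) {c : g.VH → Fin (numColors G wt)}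
    (hk9 : 9 ≤ numColors G wt) {a : g.VH} {e : Sym2 V} (he : e ∈ G.edgeFinset)
    (ha : a ∈ g.Z e) (hb : IsBVertex g.H c a) : False := by
  letI := g.fintypeVH; letI := g.decEqVH
  obtain ⟨d01,d02,d03,d04,d05,d06,d07,d08,d09,d12,d13,d14,d15,d16,d17,d18,d19,d23,d24,d25,d26,d27,d28,d29,d34,d35,d36,d37,d38,d39,d45,d46,d47,d48,d49,d56,d57,d58,d59,d67,d68,d69,d78,d79,d89⟩ := gdisj g
  have K : ∀ {a : g.VH} {s t : Finset g.VH}, Disjoint s t → a ∈ s → a ∈ t → False :=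
    fun hd h1 h2 => Finset.disjoint_left.mp hd h1 h2
  have ha8 : a ∈ G.edgeFinset.biUnion g.Z := Finset.mem_biUnion.mpr ⟨e, he, ha⟩
  have hZuniq : ∀ e' ∈ G.edgeFinset, a ∈ g.Z e' → e' = e := by
    intro e' he' ha'
    by_contra hne
    exact K (g.Z_disjoint e' he' e he hne) ha' ha
  set S : Finset g.VH :=
    (Finset.univ.filter (· ∈ e)).image (g.x e) ∪ {g.q e 0, g.q e 1} with hSdef
  have hsub : ∀ b, g.H.Adj a b → b ∈ S := by
    intro b hadj
    rw [g.adj_iff] at hadj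
    unfold GadgetData.AdjSpec at hadj
    rcases hadj with (⟨h1,h2⟩|⟨s,hs,h1,h2⟩|⟨v1,h1,h2⟩|⟨e',he',v',hv',h1,h2⟩|⟨e',he',v',hv',h1,h2⟩|⟨e',he',h1,h2⟩|⟨e',he',hh,h1,h2⟩) | (⟨h1,h2⟩|⟨s,hs,h1,h2⟩|⟨v1,h1,h2⟩|⟨e',he',v',hv',h1,h2⟩|⟨e',he',v',hv',h1,h2⟩|⟨e',he',h1,h2⟩|⟨e',he',hh,h1,h2⟩)
    · exact absurd (h1 ▸ ha8) fun hm => K d08 (Finset.mem_singleton_self _) hm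
    · exact absurd (h1.symm ▸ hs) fun hm => K d28 hm ha8
    · exact absurd (h1.symm ▸ Finset.mem_image_of_mem g.orig (Finset.mem_univ v1))
        fun hm => K d48 hm ha8
    · exact absurd (h1.symm ▸ Finset.mem_image_of_mem g.orig (Finset.mem_univ v'))
        fun hm => K d48 hm ha8
    · exact absurd (h1.symm ▸ memX g he' hv') fun hm => K d68 hm ha8
    · exact absurd (h1.symm ▸ memQ g he' 0) fun hm => K d89 ha8 hm
    · exact absurd (h1.symm ▸ memQ g he' hh) fun hm => K d89 ha8 hm
    · exact absurd h2 fun hm => K d18 hm ha8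
    · exact absurd (Finset.mem_biUnion.mpr ⟨s, hs, h2⟩) fun hm => K d38 hm ha8
    · exact absurd (Finset.mem_biUnion.mpr ⟨v1, Finset.mem_univ v1, h2⟩)
        fun hm => K d58 hm ha8
    · rcases h2 with h2 | h2
      · exact absurd (g.L_subset e' he' v' hv' h2) fun hm => K d18 hm ha8
      · exact absurd (Finset.mem_biUnion.mpr ⟨e', he', h2⟩) fun hm => K d78 hm ha8
    · rcases h2 with h2 | h2 | h2
      · exact absurd (Finset.mem_biUnion.mpr ⟨e', he', h2⟩) fun hm => K d78 hm ha8
      · obtain rfl := hZuniq e' he' h2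
        exact h1.symm ▸ Finset.mem_union_left _ (Finset.mem_image_of_mem _
          (Finset.mem_filter.mpr ⟨Finset.mem_univ _, hv'⟩))
      · exact absurd (g.L_subset e' he' v' hv' h2) fun hm => K d18 hm ha8
    · exact absurd (h2.symm ▸ memQ g he' 1) fun hm => K d89 ha8 hm
    · rcases h2 with h2 | ⟨v1, hv1, h2⟩ | ⟨v1, hv1, h2⟩
      · obtain rfl := hZuniq e' he' h2
        subst h1
        refine Finset.mem_union_right _ ?_
        fin_cases hh
        · simp
        · simp
      · exact absurd (g.L_subset e' he' v1 hv1 h2) fun hm => K d18 hm ha8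
      · exact absurd (h2.symm ▸ memX g he' hv1) fun hm => K d68 hm ha8
  have hcard := bcol_card_le hb hsub
  have hS4 : S.card ≤ 4 := by
    refine (Finset.card_union_le _ _).trans ?_
    have h1 := (Finset.card_image_le (s := Finset.univ.filter (· ∈ e)) (f := g.x e)).trans
      (filter_mem_sym2_card e)
    have h2 : ({g.q e 0, g.q e 1} : Finset g.VH).card ≤ 2 :=
      (Finset.card_insert_le _ _).trans (by simp)
    omega
  omega

end Aux7
section Aux8
open Finset
variable {V : Type*} [Fintype V] [DecidableEq V] {G : SimpleGraph V} [DecidableRel G.Adj]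
  {wt : Sym2 V → ℕ}

lemma sym2_exists_rep (e : Sym2 V) : ∃ u v : V, e = s(u, v) := by
  induction e using Sym2.inductionOn with
  | hf u v => exact ⟨u, v, rfl⟩

lemma global_bvertices (g : Gadget V G wt) {e0 : Sym2 V} (he0 : e0 ∈ G.edgeFinset)
    {u v : V} (huv : e0 = s(u, v)) (hwt1 : 1 ≤ wt e0)
    {c : g.VH → Fin (numColors G wt)}
    (hc : IsBColoring g.H (numColors G wt) c) :
    IsBVertex g.H c (g.q e0 0) ∧
      (IsBVertex g.H c (g.x e0 u) ∨ IsBVertex g.H c (g.x e0 v)) := by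
  letI := g.fintypeVH; letI := g.decEqVH
  obtain ⟨hprop, hsurj, hbv⟩ := hc
  choose φ hφc hφb using hbv
  have hu : u ∈ e0 := huv ▸ Sym2.mem_mk_left u v
  have hv : v ∈ e0 := huv ▸ Sym2.mem_mk_right u v
  have huvne : u ≠ v := by
    have := SimpleGraph.mem_edgeFinset.mp he0
    rw [huv, SimpleGraph.mem_edgeSet] at this
    exact this.ne
  have hm1 : 1 ≤ G.edgeFinset.card := Finset.card_pos.mpr ⟨e0, he0⟩
  have hW1 : 1 ≤ totW G wt :=
    le_trans hwt1 (Finset.single_le_sum (fun i _ => Nat.zero_le (wt i)) he0)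
  have hn2 : 2 ≤ Fintype.card V := Fintype.one_lt_card_iff.mpr ⟨u, v, huvne⟩
  have hknum : numColors G wt =
      2 * totW G wt + 3 * G.edgeFinset.card + Fintype.card V + 2 := rfl
  have hk9 : 9 ≤ numColors G wt := by omega
  have hφinj : Function.Injective φ := fun a b h => by rw [← hφc a, ← hφc b, h]
  set B : Finset g.VH := Finset.univ.image φ with hBdef
  have hBcard : B.card = numColors G wt := by
    rw [hBdef, Finset.card_image_of_injective _ hφinj, Finset.card_univ, Fintype.card_fin]
  have hBb : ∀ w ∈ B, IsBVertex g.H c w := by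
    intro w hw
    obtain ⟨col, -, rfl⟩ := Finset.mem_image.mp hw
    exact hφb col
  have hBinj : ∀ w1 ∈ B, ∀ w2 ∈ B, c w1 = c w2 → w1 = w2 := by
    intro w1 hw1 w2 hw2 h
    obtain ⟨col1, -, rfl⟩ := Finset.mem_image.mp hw1
    obtain ⟨col2, -, rfl⟩ := Finset.mem_image.mp hw2
    rw [hφc, hφc] at h
    rw [h]
  set T : Sym2 V → Finset g.VH :=
    fun e => (Finset.univ.filter (· ∈ e)).image (g.x e) ∪ {g.q e 0, g.q e 1} with hTdef
  set rest : Finset g.VH := {g.sstar} ∪ Finset.univ.image g.orig ∪ g.Acenters with hrestdef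
  have hBsub : B ⊆ rest ∪ G.edgeFinset.biUnion T := by
    intro b hbB
    have hbvx := hBb b hbB
    obtain ⟨p, hp, hmem⟩ := g.parts_cover b
    simp only [GadgetData.parts, List.mem_cons, List.not_mem_nil, or_false] at hp
    rcases hp with rfl|rfl|rfl|rfl|rfl|rfl|rfl|rfl|rfl|rfl
    · exact Finset.mem_union_left _ (Finset.mem_union_left _ (Finset.mem_union_left _ hmem))
    · exact (not_b_Sleaf g hk9 hmem hbvx).elim
    · exact Finset.mem_union_left _ (Finset.mem_union_right _ hmem)
    · obtain ⟨s0, hs0, hmem'⟩ := Finset.mem_biUnion.mp hmem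
      exact (not_b_Aleaf g hk9 hs0 hmem' hbvx).elim
    · exact Finset.mem_union_left _ (Finset.mem_union_left _ (Finset.mem_union_right _ hmem))
    · obtain ⟨v0, -, hmem'⟩ := Finset.mem_biUnion.mp hmem
      exact (not_b_P g hk9 hmem' hbvx).elim
    · obtain ⟨e1, he1, hmem'⟩ := Finset.mem_biUnion.mp hmem
      exact Finset.mem_union_right _
        (Finset.mem_biUnion.mpr ⟨e1, he1, Finset.mem_union_left _ hmem'⟩)
    · obtain ⟨e1, he1, hmem'⟩ := Finset.mem_biUnion.mp hmem
      exact (not_b_Y g hk9 he1 hmem' hbvx).elim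
    · obtain ⟨e1, he1, hmem'⟩ := Finset.mem_biUnion.mp hmem
      exact (not_b_Z g hk9 he1 hmem' hbvx).elim
    · obtain ⟨e1, he1, hmem'⟩ := Finset.mem_biUnion.mp hmem
      exact Finset.mem_union_right _
        (Finset.mem_biUnion.mpr ⟨e1, he1, Finset.mem_union_right _ hmem'⟩)
  have hrestcard : rest.card ≤ 2 * totW G wt + Fintype.card V + 2 := by
    refine (Finset.card_union_le _ _).trans ?_
    have h1 : (({g.sstar} : Finset g.VH) ∪ Finset.univ.image g.orig).card ≤
        1 + Fintype.card V := by
      refine (Finset.card_union_le _ _).trans ?_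
      have := Finset.card_image_le (s := (Finset.univ : Finset V)) (f := g.orig)
      simp only [Finset.card_singleton, Finset.card_univ] at *
      omega
    have h2 := g.card_Acenters
    omega
  -- each edge triple contributes at most 3
  have hTcard3 : ∀ e' ∈ G.edgeFinset, (B ∩ T e').card ≤ 3 := by
    intro e' he'
    by_contra hgt
    push_neg at hgt
    obtain ⟨u', v', huv'⟩ := sym2_exists_rep e'
    have hu' : u' ∈ e' := huv' ▸ Sym2.mem_mk_left u' v'
    have hv' : v' ∈ e' := huv' ▸ Sym2.mem_mk_right u' v'
    have hne' : u' ≠ v' := by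
      have := SimpleGraph.mem_edgeFinset.mp he'
      rw [huv', SimpleGraph.mem_edgeSet] at this
      exact this.ne
    set S4 : Finset g.VH := {g.x e' u', g.x e' v', g.q e' 0, g.q e' 1} with hS4def
    have hTsub : B ∩ T e' ⊆ S4 := by
      intro b hb
      have hb2 := (Finset.mem_inter.mp hb).2
      rw [hTdef] at hb2
      simp only [Finset.mem_union, Finset.mem_image, Finset.mem_filter,
        Finset.mem_insert, Finset.mem_singleton] at hb2
      rw [hS4def]
      simp only [Finset.mem_insert, Finset.mem_singleton]
      rcases hb2 with ⟨w, ⟨-, hw⟩, rfl⟩ | hb2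
      · rw [huv', Sym2.mem_iff] at hw
        rcases hw with rfl | rfl
        · exact Or.inl rfl
        · exact Or.inr (Or.inl rfl)
      · tauto
    have hS4card : S4.card ≤ 4 := by
      rw [hS4def]
      refine (Finset.card_insert_le _ _).trans (Nat.succ_le_succ ?_)
      refine (Finset.card_insert_le _ _).trans (Nat.succ_le_succ ?_)
      exact (Finset.card_insert_le _ _).trans (by simp)
    have heq : B ∩ T e' = S4 :=
      Finset.eq_of_subset_of_card_le hTsub (by omega)
    have hxuT : g.x e' u' ∈ S4 := by rw [hS4def]; exact Finset.mem_insert_self _ _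
    have hxvT : g.x e' v' ∈ S4 := by
      rw [hS4def]; exact Finset.mem_insert_of_mem (Finset.mem_insert_self _ _)
    have hq0T : g.q e' 0 ∈ S4 := by
      rw [hS4def]
      exact Finset.mem_insert_of_mem (Finset.mem_insert_of_mem (Finset.mem_insert_self _ _))
    have hxuB : g.x e' u' ∈ B := (Finset.mem_inter.mp (heq.symm ▸ hxuT)).1
    have hxvB : g.x e' v' ∈ B := (Finset.mem_inter.mp (heq.symm ▸ hxvT)).1
    have hq0B : g.q e' 0 ∈ B := (Finset.mem_inter.mp (heq.symm ▸ hq0T)).1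
    have hxxne : g.x e' u' ≠ g.x e' v' := by
      intro hxy
      have := Prod.mk.injEq .. ▸ (g.x_inj e' he' u' hu' e' he' v' hv' hxy)
      exact hne' this.2
    have hcne : c (g.x e' u') ≠ c (g.x e' v') :=
      fun h => hxxne (hBinj _ hxuB _ hxvB h)
    exact both_x_not g he' huv' hprop (hBb _ hxuB) (hBb _ hxvB) hcne 0 (hBb _ hq0B)
  -- counting
  have hinterU : B ⊆ (B ∩ rest) ∪ (B ∩ G.edgeFinset.biUnion T) := by
    intro b hb
    rcases Finset.mem_union.mp (hBsub hb) with h | h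
    · exact Finset.mem_union_left _ (Finset.mem_inter.mpr ⟨hb, h⟩)
    · exact Finset.mem_union_right _ (Finset.mem_inter.mpr ⟨hb, h⟩)
  have hbiU : B ∩ G.edgeFinset.biUnion T ⊆ G.edgeFinset.biUnion (fun e' => B ∩ T e') := by
    intro b hb
    obtain ⟨hbB, hbT⟩ := Finset.mem_inter.mp hb
    obtain ⟨e1, he1, hmem⟩ := Finset.mem_biUnion.mp hbT
    exact Finset.mem_biUnion.mpr ⟨e1, he1, Finset.mem_inter.mpr ⟨hbB, hmem⟩⟩
  have hcount : numColors G wt ≤ rest.card + ∑ e' ∈ G.edgeFinset, (B ∩ T e').card := by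
    calc numColors G wt = B.card := hBcard.symm
    _ ≤ ((B ∩ rest) ∪ (B ∩ G.edgeFinset.biUnion T)).card := Finset.card_le_card hinterU
    _ ≤ (B ∩ rest).card + (B ∩ G.edgeFinset.biUnion T).card := Finset.card_union_le _ _
    _ ≤ rest.card + (G.edgeFinset.biUnion (fun e' => B ∩ T e')).card := by
        have h1 := Finset.card_le_card (Finset.inter_subset_right (s₁ := B) (s₂ := rest))
        have h2 := Finset.card_le_card hbiU
        omega
    _ ≤ rest.card + ∑ e' ∈ G.edgeFinset, (B ∩ T e').card := by
        have := Finset.card_biUnion_le (s := G.edgeFinset) (t := fun e' => B ∩ T e')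
        omega
  have hsplit : ∑ e' ∈ G.edgeFinset, (B ∩ T e').card =
      (B ∩ T e0).card + ∑ e' ∈ G.edgeFinset.erase e0, (B ∩ T e').card :=
    (Finset.add_sum_erase _ _ he0).symm
  have herasesum : ∑ e' ∈ G.edgeFinset.erase e0, (B ∩ T e').card + 3 ≤
      3 * G.edgeFinset.card := by
    have h1 : ∑ e' ∈ G.edgeFinset.erase e0, (B ∩ T e').card ≤
        ∑ _e' ∈ G.edgeFinset.erase e0, 3 :=
      Finset.sum_le_sum (fun i hi => hTcard3 i (Finset.mem_of_mem_erase hi))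
    rw [Finset.sum_const, smul_eq_mul] at h1
    have h2 : (G.edgeFinset.erase e0).card = G.edgeFinset.card - 1 :=
      Finset.card_erase_of_mem he0
    omega
  have ht0 : 3 ≤ (B ∩ T e0).card := by
    rw [hsplit] at hcount
    beta_reduce at hcount
    omega
  -- q e0 0 ∈ B
  have hq0mem : g.q e0 0 ∈ T e0 := by
    rw [hTdef]
    exact Finset.mem_union_right _ (Finset.mem_insert_self _ _)
  have hq1mem : g.q e0 1 ∈ T e0 := by
    rw [hTdef]
    exact Finset.mem_union_right _ (Finset.mem_insert_of_mem (Finset.mem_singleton_self _))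
  have hxumem : g.x e0 u ∈ T e0 := by
    rw [hTdef]
    exact Finset.mem_union_left _ (Finset.mem_image_of_mem _
      (Finset.mem_filter.mpr ⟨Finset.mem_univ _, hu⟩))
  have hxvmem : g.x e0 v ∈ T e0 := by
    rw [hTdef]
    exact Finset.mem_union_left _ (Finset.mem_image_of_mem _
      (Finset.mem_filter.mpr ⟨Finset.mem_univ _, hv⟩))
  have hxxne : g.x e0 u ≠ g.x e0 v := by
    intro hxy
    have := Prod.mk.injEq .. ▸ (g.x_inj e0 he0 u hu e0 he0 v hv hxy)
    exact huvne this.2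
  have hq0B : g.q e0 0 ∈ B := by
    by_contra hq0nB
    have hsub3 : B ∩ T e0 ⊆ {g.x e0 u, g.x e0 v, g.q e0 1} := by
      intro b hb
      obtain ⟨hbB, hbT⟩ := Finset.mem_inter.mp hb
      rw [hTdef] at hbT
      simp only [Finset.mem_union, Finset.mem_image, Finset.mem_filter,
        Finset.mem_insert, Finset.mem_singleton] at hbT ⊢
      rcases hbT with ⟨w, ⟨-, hw⟩, rfl⟩ | rfl | rfl
      · rw [huv, Sym2.mem_iff] at hw
        rcases hw with rfl | rfl
        · exact Or.inl rfl
        · exact Or.inr (Or.inl rfl)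
      · exact absurd hbB hq0nB
      · exact Or.inr (Or.inr rfl)
    have hcard3 : ({g.x e0 u, g.x e0 v, g.q e0 1} : Finset g.VH).card ≤ 3 := by
      refine (Finset.card_insert_le _ _).trans (Nat.succ_le_succ ?_)
      exact (Finset.card_insert_le _ _).trans (by simp)
    have heq3 : B ∩ T e0 = {g.x e0 u, g.x e0 v, g.q e0 1} :=
      Finset.eq_of_subset_of_card_le hsub3 (by omega)
    have hxuB : g.x e0 u ∈ B := (Finset.mem_inter.mp (heq3 ▸
      Finset.mem_insert_self _ _)).1
    have hxvB : g.x e0 v ∈ B := (Finset.mem_inter.mp (heq3 ▸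
      Finset.mem_insert_of_mem (Finset.mem_insert_self _ _))).1
    have hq1B : g.q e0 1 ∈ B := (Finset.mem_inter.mp (heq3 ▸
      Finset.mem_insert_of_mem (Finset.mem_insert_of_mem (Finset.mem_singleton_self _)))).1
    have hcne : c (g.x e0 u) ≠ c (g.x e0 v) := fun h => hxxne (hBinj _ hxuB _ hxvB h)
    exact both_x_not g he0 huv hprop (hBb _ hxuB) (hBb _ hxvB) hcne 1 (hBb _ hq1B)
  refine ⟨hBb _ hq0B, ?_⟩
  by_contra hno
  push_neg at hno
  have hxunB : g.x e0 u ∉ B := fun h => hno.1 (hBb _ h)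
  have hxvnB : g.x e0 v ∉ B := fun h => hno.2 (hBb _ h)
  have hsub2 : B ∩ T e0 ⊆ {g.q e0 0, g.q e0 1} := by
    intro b hb
    obtain ⟨hbB, hbT⟩ := Finset.mem_inter.mp hb
    rw [hTdef] at hbT
    simp only [Finset.mem_union, Finset.mem_image, Finset.mem_filter,
      Finset.mem_insert, Finset.mem_singleton] at hbT ⊢
    rcases hbT with ⟨w, ⟨-, hw⟩, rfl⟩ | rfl | rfl
    · rw [huv, Sym2.mem_iff] at hw
      rcases hw with rfl | rfl
      · exact absurd hbB hxunB
      · exact absurd hbB hxvnB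
    · exact Or.inl rfl
    · exact Or.inr rfl
  have hcard2 : ({g.q e0 0, g.q e0 1} : Finset g.VH).card ≤ 2 :=
    (Finset.card_insert_le _ _).trans (by simp)
  have := Finset.card_le_card hsub2
  omega

end Aux8
/-- In any b-coloring of `H` with `k` colors, for each edge `e = uv`
either all colors of `C_{e,u}` appear on `Y_e` or all colors of `C_{e,v}` appear on
`Y_e`; the former if `x_{e,v}` is a b-vertex, the latter if `x_{e,u}` is a b-vertex. -/
theorem L_colors_appear_on_Y
    {V : Type*} [Fintype V] [DecidableEq V] (G : SimpleGraph V) [DecidableRel G.Adj]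
    (wt : Sym2 V → ℕ) (hconn : G.Connected)
    (hwt : ∀ e ∈ G.edgeFinset, 1 ≤ wt e)
    (heven : ∀ v : V, Even (vertW G wt v))
    (g : Gadget V G wt)
    (c : g.VH → Fin (numColors G wt)) (hc : IsBColoring g.H (numColors G wt) c) :
    ∀ e ∈ G.edgeFinset, ∀ u v : V, e = s(u, v) →
      (((g.L e u).image c ⊆ (g.Y e).image c ∨ (g.L e v).image c ⊆ (g.Y e).image c) ∧
        (IsBVertex g.H c (g.x e v) → (g.L e u).image c ⊆ (g.Y e).image c) ∧
        (IsBVertex g.H c (g.x e u) → (g.L e v).image c ⊆ (g.Y e).image c)) := by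
  intro e he u v huv
  obtain ⟨hq0, hxor⟩ := global_bvertices g he huv (hwt e he) hc
  have hprop := hc.1
  have part3 : IsBVertex g.H c (g.x e u) → (g.L e v).image c ⊆ (g.Y e).image c := by
    intro hx col hcol
    obtain ⟨ℓ, hℓ, rfl⟩ := Finset.mem_image.mp hcol
    obtain ⟨y, hy, hcy⟩ := x_forces g he huv hprop hx hq0 ℓ hℓ
    exact Finset.mem_image.mpr ⟨y, hy, hcy⟩
  have part2 : IsBVertex g.H c (g.x e v) → (g.L e u).image c ⊆ (g.Y e).image c := by
    intro hx col hcol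
    have huv' : e = s(v, u) := by rw [huv, Sym2.eq_swap]
    obtain ⟨ℓ, hℓ, rfl⟩ := Finset.mem_image.mp hcol
    obtain ⟨y, hy, hcy⟩ := x_forces g he huv' hprop hx hq0 ℓ hℓ
    exact Finset.mem_image.mpr ⟨y, hy, hcy⟩
  refine ⟨?_, part2, part3⟩
  rcases hxor with hx | hx
  · exact Or.inr (part3 hx)
  · exact Or.inl (part2 hx)
end
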